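/- arXiv:1709.06502 — 11 statements merged into one kernel-verified Lean document; each statement's English description precedes it below -/
import Mathlib

section
/- Let G be an ℓ-group (not necessarily abelian) with strong unit u, R a Riesz space with strong unit 1_R, and s : G → R a map satisfying: s(g) ≥ 0 for g ≥ 0, s(g+h) = s(g) + s(h) for all g, h, and s(u) = 1_R. Then Ker(s) := {x ∈ G : s(|x|) = 0} is a normal convex ℓ-subgroup (ℓ-ideal) of G. -/
/-- The kernel `{x : s(|x|) = 0}` of an additive positive unit-preserving
map from a (not necessarily abelian) unital ℓ-group to a unital Riesz space is a normal
convex ℓ-subgroup (ℓ-ideal).  Here `|x| = (x ∨ 0) + (-(x ∧ 0))`. -/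
theorem kernel_is_normal_ell_ideal
    {G R : Type*}
    [Lattice G] [AddGroup G]
    [CovariantClass G G (· + ·) (· ≤ ·)]
    [CovariantClass G G (Function.swap (· + ·)) (· ≤ ·)]
    [Lattice R] [AddCommGroup R] [CovariantClass R R (· + ·) (· ≤ ·)]
    [Module ℝ R] [PosSMulMono ℝ R]
    (u : G) (hu : 0 ≤ u) (hustrong : ∀ g : G, ∃ n : ℕ, 1 ≤ n ∧ g ≤ n • u)
    (oneR : R) (honeR : 0 ≤ oneR)
    (hRstrong : ∀ r : R, ∃ n : ℕ, 1 ≤ n ∧ r ≤ n • oneR)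
    (s : G → R)
    (hpos : ∀ g : G, 0 ≤ g → 0 ≤ s g)
    (hadd : ∀ g h : G, s (g + h) = s g + s h)
    (hunit : s u = oneR) :
    let K : Set G := {x | s ((x ⊔ 0) + -(x ⊓ 0)) = 0}
    (0 : G) ∈ K ∧
    (∀ x ∈ K, -x ∈ K) ∧
    (∀ x ∈ K, ∀ y ∈ K, x + y ∈ K) ∧
    (∀ x ∈ K, ∀ y : G, (y ⊔ 0) + -(y ⊓ 0) ≤ (x ⊔ 0) + -(x ⊓ 0) → y ∈ K) ∧
    (∀ g : G, ∀ x ∈ K, g + x + -g ∈ K) := by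
  intro K
  -- the expression is |x|
  have hexpr : ∀ x : G, (x ⊔ 0) + -(x ⊓ 0) = |x| := by
    intro x
    have h1 : x ⊔ 0 = x⁺ := rfl
    have h2 : -(x ⊓ 0) = x⁻ := by
      rw [negPart_def, neg_inf, neg_zero]
    rw [h1, h2, posPart_add_negPart]
  have hK : ∀ x : G, x ∈ K ↔ s |x| = 0 := by
    intro x; simp only [K, Set.mem_setOf_eq, hexpr]
  have hs0 : s 0 = 0 := by
    have h := hadd 0 0
    rw [add_zero] at h
    exact (right_eq_add.mp h)
  have hmono : ∀ a b : G, a ≤ b → s a ≤ s b := by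
    intro a b hab
    have : s b = s a + s (-a + b) := by
      rw [← hadd, ← add_assoc, add_neg_cancel, zero_add]
    rw [this]
    exact le_add_of_nonneg_right (hpos _ (by rwa [le_neg_add_iff_add_le, add_zero]))
  have habs0 : ∀ a : G, 0 ≤ a → s a = 0 → ∀ b : G, 0 ≤ b → b ≤ a → s b = 0 := by
    intro a _ ha b hb hba
    exact le_antisymm (ha ▸ hmono b a hba) (hpos b hb)
  constructor
  · rw [hK]; simpa using hs0
  refine ⟨?_, ?_, ?_, ?_⟩
  · intro x hx
    rw [hK] at hx ⊢
    rwa [abs_neg]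
  · intro x hx y hy
    rw [hK] at hx hy ⊢
    -- |x + y| ≤ |x| + |y| + |x|
    have hle : |x + y| ≤ |x| + |y| + |x| := by
      rw [abs_le']
      constructor
      · calc x + y ≤ |x| + |y| := add_le_add (le_abs_self x) (le_abs_self y)
          _ ≤ |x| + |y| + |x| := le_add_of_nonneg_right (abs_nonneg x)
      · rw [neg_add_rev]
        calc -y + -x ≤ |y| + |x| := add_le_add (neg_le_abs y) (neg_le_abs x)
          _ ≤ |x| + (|y| + |x|) := le_add_of_nonneg_left (abs_nonneg x)
          _ = |x| + |y| + |x| := by rw [add_assoc]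
    have hsum : s (|x| + |y| + |x|) = 0 := by
      rw [hadd, hadd, hx, hy]; simp
    exact habs0 _ (by positivity) hsum _ (abs_nonneg _) hle
  · intro x hx y hle
    rw [hK] at hx ⊢
    rw [hexpr x, hexpr y] at hle
    exact habs0 _ (abs_nonneg x) hx _ (abs_nonneg y) hle
  · intro g x hx
    rw [hK] at hx ⊢
    have hconj : |g + x + -g| = g + |x| + -g := by
      have hneg : -(g + x + -g) = g + -x + -g := by
        rw [neg_add_rev, neg_neg, neg_add_rev, ← add_assoc]
      have habsx : |x| = x ⊔ -x := rfl
      have habsc : |g + x + -g| = (g + x + -g) ⊔ -(g + x + -g) := rfl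
      rw [habsc, habsx, hneg, add_sup, sup_add]
    rw [hconj]
    have : s (g + |x| + -g) = s g + s |x| + s (-g) := by
      rw [hadd, hadd]
    rw [this, hx, add_zero, ← hadd, add_neg_cancel, hs0]
end

section
/- Let s be an (R, 1_R)-state on a pseudo MV-algebra M (an additive unit-preserving map into [0, 1_R]). Then s is an (R, 1_R)-state-morphism (a homomorphism of pseudo MV-algebras into Γ(R, 1_R)) if and only if s(x ∧ y) = s(x) ∧ s(y) for all x, y in M. -/
/-- Auxiliary commutative ℓ-group computation used in the forward direction. -/
lemma aux_R_computation {R : Type*} [Lattice R] [AddCommGroup R]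
    [CovariantClass R R (· + ·) (· ≤ ·)]
    (e a b : R) (ha0 : 0 ≤ a) (hb0 : 0 ≤ b) :
    -(((e - ((e - a + b) ⊓ e)) + (e - a)) ⊓ e) + e = a ⊓ b := by
  have covR : CovariantClass R R (Function.swap (· + ·)) (· ≤ ·) :=
    ⟨fun c x y h => by simpa [add_comm] using add_le_add_left h c⟩
  have h1 : e - ((e - a + b) ⊓ e) = (a - b) ⊔ 0 := by
    rw [sub_eq_add_neg, neg_inf, add_sup]
    congr 1 <;> abel
  have h2 : (e - ((e - a + b) ⊓ e)) + (e - a) = (e - b) ⊔ (e - a) := by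
    rw [h1, sup_add]
    congr 1 <;> abel
  have h3 : ((e - b) ⊔ (e - a)) ⊓ e = (e - b) ⊔ (e - a) := by
    refine inf_eq_left.2 (sup_le ?_ ?_)
    · simpa using sub_le_self e hb0
    · simpa using sub_le_self e ha0
  rw [h2, h3, neg_sup, inf_add]
  have hb' : -(e - b) + e = b := by abel
  have ha' : -(e - a) + e = a := by abel
  rw [hb', ha', inf_comm]

/-- An `(R,1_R)`-state `s` on the pseudo MV-algebra `Γ(G,u)` is an
`(R,1_R)`-state-morphism (preserves `⊕`, both negations, `0` and `1`) if and only if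
`s(x ∧ y) = s(x) ∧ s(y)` for all `x, y` in `[0,u]`. -/
theorem state_morphism_iff_preserves_inf
    {G R : Type*}
    [Lattice G] [AddGroup G]
    [CovariantClass G G (· + ·) (· ≤ ·)]
    [CovariantClass G G (Function.swap (· + ·)) (· ≤ ·)]
    [Lattice R] [AddCommGroup R] [CovariantClass R R (· + ·) (· ≤ ·)]
    [Module ℝ R] [PosSMulMono ℝ R]
    (u : G) (hu : 0 ≤ u) (hustrong : ∀ g : G, ∃ n : ℕ, 1 ≤ n ∧ g ≤ n • u)
    (oneR : R) (honeR : 0 ≤ oneR)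
    (hRstrong : ∀ r : R, ∃ n : ℕ, 1 ≤ n ∧ r ≤ n • oneR)
    (s : G → R)
    (hs1 : s u = oneR)
    (hrange : ∀ x : G, 0 ≤ x → x ≤ u → 0 ≤ s x ∧ s x ≤ oneR)
    (hadd : ∀ x y : G, 0 ≤ x → 0 ≤ y → x + y ≤ u → s (x + y) = s x + s y) :
    ((∀ x y : G, 0 ≤ x → x ≤ u → 0 ≤ y → y ≤ u →
        s ((x + y) ⊓ u) = (s x + s y) ⊓ oneR) ∧
      (∀ x : G, 0 ≤ x → x ≤ u → s (u + -x) = oneR - s x) ∧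
      (∀ x : G, 0 ≤ x → x ≤ u → s (-x + u) = -(s x) + oneR) ∧
      s 0 = 0)
    ↔ (∀ x y : G, 0 ≤ x → x ≤ u → 0 ≤ y → y ≤ u →
        s (x ⊓ y) = s x ⊓ s y) := by
  -- Basic facts that hold for any state, independent of either side.
  have hs0 : s 0 = 0 := by
    have h := hadd 0 0 le_rfl le_rfl (by simpa using hu)
    simp only [add_zero] at h
    exact (left_eq_add.1 h).symm ▸ rfl
  have hneg1 : ∀ x : G, 0 ≤ x → x ≤ u → s (u + -x) = oneR - s x := by
    intro x hx hxu
    have h0 : (0 : G) ≤ u + -x := by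
      have := sub_nonneg.2 hxu
      rwa [sub_eq_add_neg] at this
    have hsum : (u + -x) + x = u := by rw [neg_add_cancel_right]
    have h := hadd (u + -x) x h0 hx (le_of_eq hsum)
    rw [hsum, hs1] at h
    exact eq_sub_of_add_eq h.symm
  have hneg2 : ∀ x : G, 0 ≤ x → x ≤ u → s (-x + u) = -(s x) + oneR := by
    intro x hx hxu
    have h0 : (0 : G) ≤ -x + u := by
      rwa [le_neg_add_iff_add_le, add_zero]
    have hsum : x + (-x + u) = u := by rw [add_neg_cancel_left]
    have h := hadd x (-x + u) hx h0 (le_of_eq hsum)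
    rw [hsum, hs1] at h
    exact eq_neg_add_of_add_eq h.symm
  constructor
  · -- morphism → preserves inf
    rintro ⟨hop, _, _, _⟩ x y hx hxu hy hyu
    have hux0 : (0 : G) ≤ u + -x := by
      have := sub_nonneg.2 hxu
      rwa [sub_eq_add_neg] at this
    have huxu : u + -x ≤ u := by
      simpa using add_le_add_left (neg_nonpos.2 hx) u
    set z : G := (u + -x + y) ⊓ u with hzdef
    have hz0 : (0 : G) ≤ z := le_inf (add_nonneg hux0 hy) hu
    have hzu : z ≤ u := inf_le_right
    have hsz : s z = ((oneR - s x) + s y) ⊓ oneR := by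
      have := hop (u + -x) y hux0 huxu hy hyu
      rw [hneg1 x hx hxu] at this
      exact this
    have huz0 : (0 : G) ≤ u + -z := by
      have := sub_nonneg.2 hzu
      rwa [sub_eq_add_neg] at this
    have huzu : u + -z ≤ u := by
      simpa using add_le_add_left (neg_nonpos.2 hz0) u
    set w : G := (u + -z + (u + -x)) ⊓ u with hwdef
    have hw0 : (0 : G) ≤ w := le_inf (add_nonneg huz0 hux0) hu
    have hwu : w ≤ u := inf_le_right
    have hsw : s w = ((oneR - s z) + (oneR - s x)) ⊓ oneR := by
      have := hop (u + -z) (u + -x) huz0 huzu hux0 huxu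
      rw [hneg1 z hz0 hzu, hneg1 x hx hxu] at this
      exact this
    -- the key ℓ-group identity:  -w + u = x ⊓ y
    have hkeyG : -w + u = x ⊓ y := by
      have h1 : x + -u + z = y ⊓ x := by
        rw [hzdef, add_inf]
        congr 1
        · rw [← add_assoc, ← add_assoc]
          simp [add_assoc]
        · simp [add_assoc]
      have h2 : -(u + -z + (u + -x)) + u = x + -u + z := by
        simp [neg_add_rev, add_assoc]
      rw [hwdef, neg_inf, sup_add, h2, h1, neg_add_cancel]
      rw [sup_eq_left.2 (le_inf hy hx), inf_comm]
    have hswu : s (-w + u) = -(s w) + oneR := hneg2 w hw0 hwu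
    rw [← hkeyG, hswu, hsw, hsz]
    have ha0 := (hrange x hx hxu).1
    have hb0 := (hrange y hy hyu).1
    simpa [sub_eq_add_neg] using aux_R_computation oneR (s x) (s y) ha0 hb0
  · -- preserves inf → morphism
    intro hinf
    refine ⟨?_, hneg1, hneg2, hs0⟩
    intro x y hx hxu hy hyu
    have hx0 : (0 : G) ≤ -x + u := by
      rwa [le_neg_add_iff_add_le, add_zero]
    have hxu' : -x + u ≤ u := by
      simpa using add_le_add_right (neg_nonpos.2 hx) u
    have hid : (x + y) ⊓ u = x + ((-x + u) ⊓ y) := by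
      rw [add_inf, add_neg_cancel_left, inf_comm]
    have h0 : (0 : G) ≤ (-x + u) ⊓ y := le_inf hx0 hy
    have hb : x + ((-x + u) ⊓ y) ≤ u := by
      calc x + ((-x + u) ⊓ y) ≤ x + (-x + u) := add_le_add_right inf_le_left x
        _ = u := add_neg_cancel_left x u
    rw [hid, hadd x ((-x + u) ⊓ y) hx h0 hb,
      hinf (-x + u) y hx0 hxu' hy hyu, hneg2 x hx hxu,
      add_inf, add_neg_cancel_left, inf_comm]
end

section
/- Let s be an (R, 1_R)-state on a pseudo MV-algebra M whose kernel Ker(s) = {x : s(x) = 0} is a maximal ideal of M. Then s is an (R, 1_R)-state-morphism, i.e., s(x ∧ y) = s(x) ∧ s(y) for all x, y. -/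
section

variable {G : Type*} [Lattice G] [AddGroup G]
  [CovariantClass G G (· + ·) (· ≤ ·)]
  [CovariantClass G G (Function.swap (· + ·)) (· ≤ ·)]

/-- An ideal of the pseudo MV-algebra `Γ(G,u) = [0,u]`: a nonempty downward-closed
subset of `[0,u]` closed under the MV-sum `x ⊕ y = (x + y) ⊓ u`. -/
def IsMVIdeal (u : G) (I : Set G) : Prop :=
  I ⊆ {x : G | 0 ≤ x ∧ x ≤ u} ∧ I.Nonempty ∧
  (∀ a b : G, b ∈ I → 0 ≤ a → a ≤ b → a ∈ I) ∧
  (∀ a ∈ I, ∀ b ∈ I, (a + b) ⊓ u ∈ I)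

/-- A maximal ideal of `Γ(G,u)`: a proper ideal not properly contained in any
proper ideal. -/
def IsMaximalMVIdeal (u : G) (I : Set G) : Prop :=
  IsMVIdeal u I ∧ I ≠ {x : G | 0 ≤ x ∧ x ≤ u} ∧
  ∀ J : Set G, IsMVIdeal u J → I ⊆ J → J = I ∨ J = {x : G | 0 ≤ x ∧ x ≤ u}

/-- Riesz-type inequality in an ℓ-group: for positives, `(p+q) ⊓ b ≤ p⊓b + q⊓b`. -/
lemma riesz_inf {u : G} (p q b : G) (hp : 0 ≤ p) (hq : 0 ≤ q) (hb : 0 ≤ b) :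
    (p + q) ⊓ b ≤ (p ⊓ b) + (q ⊓ b) := by
  have h1 : (p ⊓ b) + (q ⊓ b) = (p + (q ⊓ b)) ⊓ (b + (q ⊓ b)) := by
    rw [inf_add]
  rw [h1]
  refine le_inf ?_ ?_
  · rw [add_inf]
    refine le_inf (inf_le_left) ?_
    exact inf_le_right.trans (le_add_of_nonneg_left hp)
  · exact inf_le_right.trans (le_add_of_nonneg_right (le_inf hq hb))

/-- If the kernel of an `(R,1_R)`-state `s` on the pseudo MV-algebra
`Γ(G,u)` is a maximal ideal, then `s` is an `(R,1_R)`-state-morphism, i.e.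
`s(x ∧ y) = s(x) ∧ s(y)`. -/
theorem state_morphism_of_maximal_kernel
    {R : Type*}
    [Lattice R] [AddCommGroup R] [CovariantClass R R (· + ·) (· ≤ ·)]
    [Module ℝ R] [PosSMulMono ℝ R]
    (u : G) (hu : 0 ≤ u) (hustrong : ∀ g : G, ∃ n : ℕ, 1 ≤ n ∧ g ≤ n • u)
    (oneR : R) (honeR : 0 ≤ oneR)
    (hRstrong : ∀ r : R, ∃ n : ℕ, 1 ≤ n ∧ r ≤ n • oneR)
    (s : G → R)
    (hs1 : s u = oneR)
    (hrange : ∀ x : G, 0 ≤ x → x ≤ u → 0 ≤ s x ∧ s x ≤ oneR)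
    (hadd : ∀ x y : G, 0 ≤ x → 0 ≤ y → x + y ≤ u → s (x + y) = s x + s y)
    (hker : IsMaximalMVIdeal u {x : G | (0 ≤ x ∧ x ≤ u) ∧ s x = 0}) :
    ∀ x y : G, 0 ≤ x → x ≤ u → 0 ≤ y → y ≤ u →
      s (x ⊓ y) = s x ⊓ s y := by
  set I : Set G := {x : G | (0 ≤ x ∧ x ≤ u) ∧ s x = 0} with hIdef
  obtain ⟨⟨hIsub, hIne, hIdown, hIclose⟩, hIproper, hImax⟩ := hker
  have hs0 : s 0 = 0 := by
    have := hadd 0 0 le_rfl le_rfl (by simpa using hu)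
    simp at this
    exact this
  have h0I : (0 : G) ∈ I := ⟨⟨le_rfl, hu⟩, hs0⟩
  intro x y hx hxu hy hyu
  set m : G := x ⊓ y with hm
  have hm0 : 0 ≤ m := le_inf hx hy
  have hmu : m ≤ u := inf_le_left.trans hxu
  set a : G := -m + x with hadef
  set b : G := -m + y with hbdef
  have ha0 : 0 ≤ a := by rw [hadef, le_neg_add_iff_add_le, add_zero]; exact inf_le_left
  have hb0 : 0 ≤ b := by rw [hbdef, le_neg_add_iff_add_le, add_zero]; exact inf_le_right
  have hma : m + a = x := by rw [hadef, add_neg_cancel_left]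
  have hmb : m + b = y := by rw [hbdef, add_neg_cancel_left]
  have hau : a ≤ u := le_trans (by rw [hadef]; exact le_trans (add_le_add_left (neg_nonpos.mpr hm0) x) (by simp)) hxu
  have hbu : b ≤ u := le_trans (by rw [hbdef]; exact le_trans (add_le_add_left (neg_nonpos.mpr hm0) y) (by simp)) hyu
  have hab : a ⊓ b = 0 := by
    rw [hadef, hbdef, ← add_inf, ← hm, neg_add_cancel]
  -- s(x) = s(m) + s(a), s(y) = s(m) + s(b)
  have hsx : s x = s m + s a := by rw [← hma]; exact hadd m a hm0 ha0 (hma ▸ hxu)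
  have hsy : s y = s m + s b := by rw [← hmb]; exact hadd m b hm0 hb0 (hmb ▸ hyu)
  have hsa0 : 0 ≤ s a := (hrange a ha0 hau).1
  have hsb0 : 0 ≤ s b := (hrange b hb0 hbu).1
  -- key: s a = 0 or s b = 0
  have key : s a = 0 ∨ s b = 0 := by
    by_cases hsa : s a = 0
    · exact Or.inl hsa
    right
    -- a ∉ I; consider J = {z ∈ [0,u] : z ⊓ b ∈ I}
    set J : Set G := {z : G | (0 ≤ z ∧ z ≤ u) ∧ z ⊓ b ∈ I} with hJdef
    have hJideal : IsMVIdeal u J := by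
      refine ⟨fun z hz => hz.1, ⟨0, ⟨⟨le_rfl, hu⟩, by
        rw [inf_eq_left.mpr hb0]; exact h0I⟩⟩, ?_, ?_⟩
      · rintro p q ⟨⟨hq0, hqu⟩, hqb⟩ hp0 hpq
        exact ⟨⟨hp0, hpq.trans hqu⟩,
          hIdown (p ⊓ b) (q ⊓ b) hqb (le_inf hp0 hb0) (inf_le_inf_right b hpq)⟩
      · rintro p ⟨⟨hp0, hpu⟩, hpb⟩ q ⟨⟨hq0, hqu⟩, hqb⟩
        have hz0 : (0 : G) ≤ (p + q) ⊓ u := le_inf (add_nonneg hp0 hq0) hu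
        refine ⟨⟨hz0, inf_le_right⟩, ?_⟩
        have h1 : ((p + q) ⊓ u) ⊓ b ≤ ((p ⊓ b) + (q ⊓ b)) ⊓ u := by
          refine le_inf ?_ (inf_le_left.trans inf_le_right)
          exact le_trans (inf_le_inf_right b inf_le_left)
            (riesz_inf (u := u) p q b hp0 hq0 hb0)
        exact hIdown _ _ (hIclose _ hpb _ hqb) (le_inf hz0 hb0) h1
    have hIJ : I ⊆ J := by
      rintro i ⟨⟨hi0, hiu⟩, hsi⟩
      exact ⟨⟨hi0, hiu⟩, hIdown (i ⊓ b) i ⟨⟨hi0, hiu⟩, hsi⟩ (le_inf hi0 hb0) inf_le_left⟩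
    have haJ : a ∈ J := ⟨⟨ha0, hau⟩, by rw [hab]; exact h0I⟩
    rcases hImax J hJideal hIJ with hJI | hJfull
    · exfalso
      rw [hJI] at haJ
      exact hsa haJ.2
    · have hbJ : b ∈ J := by
        rw [hJfull]; exact ⟨hb0, hbu⟩
      have : b ∈ I := by
        have := hbJ.2
        rwa [inf_idem] at this
      exact this.2
  -- conclude
  rcases key with hsa | hsb
  · have hxy : s x ≤ s y := by rw [hsx, hsy, hsa, add_zero]; exact le_add_of_nonneg_right hsb0
    rw [inf_eq_left.mpr hxy, hsx, hsa, add_zero]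
  · have hyx : s y ≤ s x := by rw [hsx, hsy, hsb, add_zero]; exact le_add_of_nonneg_right hsa0
    rw [inf_eq_right.mpr hyx, hsy, hsb, add_zero]
end
end

section
/- Let (R, 1_R) be a unital Riesz space in which every strictly positive element is a strong unit. If s is an (R, 1_R)-state-morphism on a pseudo MV-algebra M, then Ker(s) is a maximal ideal of M. -/
section

variable {G : Type*} [Lattice G] [AddGroup G]
  [CovariantClass G G (· + ·) (· ≤ ·)]
  [CovariantClass G G (Function.swap (· + ·)) (· ≤ ·)]

/-- If every strictly positive element of the unital Riesz space `(R,1_R)`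
is a strong unit, then the kernel of any `(R,1_R)`-state-morphism on a pseudo
MV-algebra `Γ(G,u)` is a maximal ideal. -/
theorem maximal_kernel_of_state_morphism
    {R : Type*}
    [Lattice R] [AddCommGroup R] [CovariantClass R R (· + ·) (· ≤ ·)]
    [Module ℝ R] [PosSMulMono ℝ R]
    (u : G) (hu : 0 ≤ u) (hustrong : ∀ g : G, ∃ n : ℕ, 1 ≤ n ∧ g ≤ n • u)
    (oneR : R) (honeR : 0 < oneR)
    (hRstrong : ∀ r : R, ∃ n : ℕ, 1 ≤ n ∧ r ≤ n • oneR)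
    (hRsimple : ∀ e : R, 0 < e → ∀ r : R, ∃ n : ℕ, 1 ≤ n ∧ r ≤ n • e)
    (s : G → R)
    (hs0 : s 0 = 0) (hs1 : s u = oneR)
    (hrange : ∀ x : G, 0 ≤ x → x ≤ u → 0 ≤ s x ∧ s x ≤ oneR)
    (hoplus : ∀ x y : G, 0 ≤ x → x ≤ u → 0 ≤ y → y ≤ u →
      s ((x + y) ⊓ u) = (s x + s y) ⊓ oneR)
    (hnegl : ∀ x : G, 0 ≤ x → x ≤ u → s (u + -x) = oneR - s x)
    (hnegr : ∀ x : G, 0 ≤ x → x ≤ u → s (-x + u) = -(s x) + oneR) :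
    IsMaximalMVIdeal u {x : G | (0 ≤ x ∧ x ≤ u) ∧ s x = 0} := by
  -- monotonicity of s on [0,u]
  have hmono : ∀ a b : G, 0 ≤ a → a ≤ b → b ≤ u → s a ≤ s b := by
    intro a b ha hab hbu
    have hau : a ≤ u := le_trans hab hbu
    have hc0 : 0 ≤ -a + b := by
      have := add_le_add_left hab (-a); simpa using this
    have hcu : -a + b ≤ u := by
      refine le_trans ?_ hbu
      have := add_le_add_right (neg_nonpos.2 ha) b
      simpa using this
    have h := hoplus a (-a + b) ha hau hc0 hcu
    rw [add_neg_cancel_left, inf_eq_left.2 hbu] at h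
    rw [h]
    exact le_inf (le_add_of_nonneg_right (hrange _ hc0 hcu).1) (hrange a ha hau).2
  have hKideal : IsMVIdeal u {x : G | (0 ≤ x ∧ x ≤ u) ∧ s x = 0} := by
    refine ⟨fun x hx => hx.1, ⟨0, ⟨⟨le_refl 0, hu⟩, hs0⟩⟩, ?_, ?_⟩
    · intro a b hb ha hab
      have hau : a ≤ u := le_trans hab hb.1.2
      refine ⟨⟨ha, hau⟩, le_antisymm ?_ (hrange a ha hau).1⟩
      calc s a ≤ s b := hmono a b ha hab hb.1.2
        _ = 0 := hb.2
    · intro a ha b hb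
      have h0 : (0:G) ≤ (a + b) ⊓ u := le_inf (add_nonneg ha.1.1 hb.1.1) hu
      refine ⟨⟨h0, inf_le_right⟩, ?_⟩
      rw [hoplus a b ha.1.1 ha.1.2 hb.1.1 hb.1.2, ha.2, hb.2, add_zero]
      exact inf_eq_left.2 honeR.le
  refine ⟨hKideal, ?_, ?_⟩
  · intro h
    have hu' : u ∈ {x : G | (0 ≤ x ∧ x ≤ u) ∧ s x = 0} := by
      rw [h]; exact ⟨hu, le_refl u⟩
    exact honeR.ne' (hs1 ▸ hu'.2)
  · intro J hJ hKJ
    by_cases hJK : J ⊆ {x : G | (0 ≤ x ∧ x ≤ u) ∧ s x = 0}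
    · left; exact subset_antisymm hJK hKJ
    · right
      rw [Set.not_subset] at hJK
      obtain ⟨x, hxJ, hxK⟩ := hJK
      have hxmem := hJ.1 hxJ
      have hsx0 : 0 < s x := by
        rcases (hrange x hxmem.1 hxmem.2).1.lt_or_eq with h | h
        · exact h
        · exact absurd ⟨hxmem, h.symm⟩ hxK
      obtain ⟨n, hn1, hn⟩ := hRsimple (s x) hsx0 oneR
      have key : ∀ k : ℕ, ((k+1) • x) ⊓ u ∈ J ∧
          s (((k+1) • x) ⊓ u) = ((k+1) • s x) ⊓ oneR := by
        intro k
        induction k with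
        | zero =>
          simp only [Nat.zero_add, one_smul, one_nsmul]
          rw [inf_eq_left.2 hxmem.2]
          exact ⟨hxJ, (inf_eq_left.2 (hrange x hxmem.1 hxmem.2).2).symm⟩
        | succ k ih =>
          have hk0 : (0:G) ≤ (k+1) • x := nsmul_nonneg hxmem.1 _
          have hi0 : (0:G) ≤ ((k+1) • x) ⊓ u := le_inf hk0 hu
          have h4 := hJ.2.2.2 _ ih.1 x hxJ
          have halg : (((k+1) • x) ⊓ u + x) ⊓ u = ((k+1+1) • x) ⊓ u := by
            rw [inf_add, inf_assoc, inf_eq_right.2 (le_add_of_nonneg_right hxmem.1),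
              ← succ_nsmul]
          rw [halg] at h4
          refine ⟨h4, ?_⟩
          have hs4 := hoplus (((k+1) • x) ⊓ u) x hi0 inf_le_right hxmem.1 hxmem.2
          rw [halg, ih.2] at hs4
          rw [hs4, inf_add, inf_assoc,
            inf_eq_right.2 (le_add_of_nonneg_right (hrange x hxmem.1 hxmem.2).1),
            ← succ_nsmul]
      obtain ⟨m, rfl⟩ : ∃ m, n = m + 1 := ⟨n - 1, by omega⟩
      obtain ⟨hxnJ, hsxn⟩ := key m
      set z : G := ((m+1) • x) ⊓ u with hz
      have hsz : s z = oneR := by rw [hsxn]; exact inf_eq_right.2 hn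
      have hz0 : (0:G) ≤ z := le_inf (nsmul_nonneg hxmem.1 _) hu
      have hzu : z ≤ u := inf_le_right
      have hc0 : (0:G) ≤ u + -z := by
        have := add_le_add_right hzu (-z); simpa using this
      have hcu : u + -z ≤ u := by
        have := add_le_add_left (neg_nonpos.2 hz0) u; simpa using this
      have hcK : u + -z ∈ {x : G | (0 ≤ x ∧ x ≤ u) ∧ s x = 0} := by
        refine ⟨⟨hc0, hcu⟩, ?_⟩
        rw [hnegl z hz0 hzu, hsz, sub_self]
      have hcJ : u + -z ∈ J := hKJ hcK
      have huJ : u ∈ J := by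
        have h5 := hJ.2.2.2 _ hcJ _ hxnJ
        rwa [neg_add_cancel_right, inf_idem] at h5
      ext y
      constructor
      · exact fun hy => hJ.1 hy
      · exact fun hy => hJ.2.2.1 y u huJ hy.1 hy.2


end
end

section
/- Two MV-subalgebras of the standard MV-algebra [0,1] that are isomorphic as MV-algebras are equal, and the isomorphism is the identity map. -/
/-- Carry step: combine `x` with the running top `p.1` via truncated sum,
pushing the "carry" `x ⊙ p.1` onto the rest list. -/
private def mvCarry (x : ℝ) (p : ℝ × List ℝ) : ℝ × List ℝ :=
  (min (x + p.1) 1, (1 - min ((1 - x) + (1 - p.1)) 1) :: p.2)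

private def mvNorm (l : List ℝ) : ℝ × List ℝ := l.foldr mvCarry (0, [])

private lemma mv_sum_id (a b : ℝ) :
    min (a + b) 1 + (1 - min ((1 - a) + (1 - b)) 1) = a + b := by
  rcases le_total (a + b) 1 with h | h
  · rw [min_eq_left h, min_eq_right (by linarith)]; ring
  · rw [min_eq_right h, min_eq_left (by linarith)]; ring

private lemma mvNorm_spec (A B : Set ℝ) (hA : A ⊆ Set.Icc 0 1)
    (h0A : (0 : ℝ) ∈ A)
    (hAoplus : ∀ x ∈ A, ∀ y ∈ A, min (x + y) 1 ∈ A)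
    (hAneg : ∀ x ∈ A, 1 - x ∈ A)
    (φ : ℝ → ℝ)
    (hφ0 : φ 0 = 0)
    (hφoplus : ∀ x ∈ A, ∀ y ∈ A, φ (min (x + y) 1) = min (φ x + φ y) 1)
    (hφneg : ∀ x ∈ A, φ (1 - x) = 1 - φ x)
    (l : List ℝ) (hl : ∀ a ∈ l, a ∈ A) :
    (mvNorm l).1 ∈ A ∧ (∀ a ∈ (mvNorm l).2, a ∈ A) ∧
    (mvNorm l).1 = min l.sum 1 ∧
    φ (mvNorm l).1 + ((mvNorm l).2.map φ).sum = (l.map φ).sum := by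
  induction l with
  | nil => simp [mvNorm, hφ0, h0A, min_eq_left (zero_le_one : (0:ℝ) ≤ 1)]
  | cons x l ih =>
    have hx : x ∈ A := hl x List.mem_cons_self
    have hl' : ∀ a ∈ l, a ∈ A := fun a ha => hl a (List.mem_cons_of_mem _ ha)
    obtain ⟨htA, hrA, htop, hφsum⟩ := ih hl'
    set t := (mvNorm l).1 with ht
    set r := (mvNorm l).2 with hr
    have hnorm : mvNorm (x :: l) =
        (min (x + t) 1, (1 - min ((1 - x) + (1 - t)) 1) :: r) := rfl
    have hcarryA : min ((1 - x) + (1 - t)) 1 ∈ A :=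
      hAoplus _ (hAneg _ hx) _ (hAneg _ htA)
    refine ⟨?_, ?_, ?_, ?_⟩
    · rw [hnorm]; exact hAoplus _ hx _ htA
    · rw [hnorm]
      intro a ha
      rcases List.mem_cons.1 ha with h | h
      · rw [h]; exact hAneg _ hcarryA
      · exact hrA a h
    · rw [hnorm]
      simp only [List.sum_cons]
      have hx0 : 0 ≤ x := (hA hx).1
      rcases le_total l.sum 1 with h | h
      · rw [htop, min_eq_left h]
      · rw [htop, min_eq_right h,
          min_eq_right (by linarith : (1:ℝ) ≤ x + 1),
          min_eq_right (by linarith : (1:ℝ) ≤ x + l.sum)]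
    · rw [hnorm]
      simp only [List.map_cons, List.sum_cons]
      have e1 : φ (min (x + t) 1) = min (φ x + φ t) 1 := hφoplus _ hx _ htA
      have e2 : φ (1 - min ((1 - x) + (1 - t)) 1)
          = 1 - min ((1 - φ x) + (1 - φ t)) 1 := by
        rw [hφneg _ hcarryA, hφoplus _ (hAneg _ hx) _ (hAneg _ htA),
          hφneg _ hx, hφneg _ htA]
      rw [e1, e2, ← add_assoc]
      have := mv_sum_id (φ x) (φ t)
      linarith [hφsum]

private lemma mv_list_bound (A B : Set ℝ) (hA : A ⊆ Set.Icc 0 1)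
    (hB : B ⊆ Set.Icc 0 1)
    (h0A : (0 : ℝ) ∈ A)
    (hAoplus : ∀ x ∈ A, ∀ y ∈ A, min (x + y) 1 ∈ A)
    (hAneg : ∀ x ∈ A, 1 - x ∈ A)
    (φ : ℝ → ℝ) (hmaps : ∀ x ∈ A, φ x ∈ B)
    (hφ0 : φ 0 = 0)
    (hφoplus : ∀ x ∈ A, ∀ y ∈ A, φ (min (x + y) 1) = min (φ x + φ y) 1)
    (hφneg : ∀ x ∈ A, φ (1 - x) = 1 - φ x) :
    ∀ (m : ℕ) (l : List ℝ), (∀ a ∈ l, a ∈ A) → l.sum ≤ (m : ℝ) →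
      ((l.map φ).sum : ℝ) ≤ (m : ℝ) := by
  intro m
  induction m with
  | zero =>
    intro l
    induction l with
    | nil => simp
    | cons x l ih =>
      intro hmem hs
      simp only [List.sum_cons, Nat.cast_zero] at hs
      have hx : x ∈ A := hmem x List.mem_cons_self
      have hl' : ∀ a ∈ l, a ∈ A := fun a ha => hmem a (List.mem_cons_of_mem _ ha)
      have hsl : 0 ≤ l.sum := List.sum_nonneg (fun a ha => (hA (hl' a ha)).1)
      have hx0 : x = 0 := le_antisymm (by linarith [(hA hx).1]) (hA hx).1
      have := ih hl' (by simpa using (by linarith : l.sum ≤ (0:ℝ)))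
      simp only [List.map_cons, List.sum_cons, hx0, hφ0, Nat.cast_zero] at *
      linarith
  | succ m ih =>
    intro l hl hs
    obtain ⟨htA, hrA, htop, hφsum⟩ :=
      mvNorm_spec A B hA h0A hAoplus hAneg φ hφ0 hφoplus hφneg l hl
    have hrest : (mvNorm l).2.sum ≤ (m : ℝ) := by
      have hsum : (mvNorm l).1 + (mvNorm l).2.sum = l.sum := by
        have : ∀ l' : List ℝ, (mvNorm l').1 + (mvNorm l').2.sum = l'.sum := by
          intro l'
          induction l' with
          | nil => simp [mvNorm]
          | cons y l' ih' =>
            have : mvNorm (y :: l') =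
              (min (y + (mvNorm l').1) 1,
                (1 - min ((1 - y) + (1 - (mvNorm l').1)) 1) :: (mvNorm l').2) := rfl
            rw [this]
            simp only [List.sum_cons]
            have := mv_sum_id y (mvNorm l').1
            linarith [ih']
        exact this l
      rcases le_total l.sum 1 with h | h
      · rw [htop, min_eq_left h] at hsum
        have : (mvNorm l).2.sum = 0 := by linarith
        rw [this]; exact_mod_cast Nat.cast_nonneg m
      · rw [htop, min_eq_right h] at hsum
        push_cast at hs ⊢
        linarith
    have hIH := ih (mvNorm l).2 hrA hrest
    have hφtop : φ (mvNorm l).1 ≤ 1 := (hB (hmaps _ htA)).2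
    push_cast
    linarith [hφsum]

private lemma mv_rep_bound (A B : Set ℝ) (hA : A ⊆ Set.Icc 0 1)
    (hB : B ⊆ Set.Icc 0 1)
    (h0A : (0 : ℝ) ∈ A)
    (hAoplus : ∀ x ∈ A, ∀ y ∈ A, min (x + y) 1 ∈ A)
    (hAneg : ∀ x ∈ A, 1 - x ∈ A)
    (φ : ℝ → ℝ) (hmaps : ∀ x ∈ A, φ x ∈ B)
    (hφ0 : φ 0 = 0)
    (hφoplus : ∀ x ∈ A, ∀ y ∈ A, φ (min (x + y) 1) = min (φ x + φ y) 1)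
    (hφneg : ∀ x ∈ A, φ (1 - x) = 1 - φ x)
    {x : ℝ} (hx : x ∈ A) (n m : ℕ) (h : (n : ℝ) * x ≤ m) :
    (n : ℝ) * φ x ≤ m := by
  have h1 : (List.replicate n x).sum = (n : ℝ) * x := by
    simp [List.sum_replicate, nsmul_eq_mul]
  have h2 : ((List.replicate n x).map φ).sum = (n : ℝ) * φ x := by
    simp [List.map_replicate, List.sum_replicate, nsmul_eq_mul]
  have := mv_list_bound A B hA hB h0A hAoplus hAneg φ hmaps hφ0 hφoplus hφneg
    m (List.replicate n x) (fun a ha => by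
      rw [List.eq_of_mem_replicate ha]; exact hx) (by rw [h1]; exact h)
  rwa [h2] at this

/-- Two MV-subalgebras of the standard MV-algebra `[0,1]` that are
isomorphic as MV-algebras are equal, and the isomorphism is the identity. -/
theorem mv_subalgebras_of_unit_interval_isomorphic_eq
    (A B : Set ℝ)
    (hA : A ⊆ Set.Icc 0 1) (hB : B ⊆ Set.Icc 0 1)
    (h0A : (0 : ℝ) ∈ A) (h1A : (1 : ℝ) ∈ A)
    (h0B : (0 : ℝ) ∈ B) (h1B : (1 : ℝ) ∈ B)
    (hAoplus : ∀ x ∈ A, ∀ y ∈ A, min (x + y) 1 ∈ A)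
    (hAneg : ∀ x ∈ A, 1 - x ∈ A)
    (hBoplus : ∀ x ∈ B, ∀ y ∈ B, min (x + y) 1 ∈ B)
    (hBneg : ∀ x ∈ B, 1 - x ∈ B)
    (φ : ℝ → ℝ)
    (hbij : Set.BijOn φ A B)
    (hφ0 : φ 0 = 0) (hφ1 : φ 1 = 1)
    (hφoplus : ∀ x ∈ A, ∀ y ∈ A, φ (min (x + y) 1) = min (φ x + φ y) 1)
    (hφneg : ∀ x ∈ A, φ (1 - x) = 1 - φ x) :
    A = B ∧ ∀ x ∈ A, φ x = x := by
  have hmaps : ∀ x ∈ A, φ x ∈ B := fun x hx => hbij.mapsTo hx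
  have key : ∀ x ∈ A, ∀ n m : ℕ, (n : ℝ) * x ≤ m → (n : ℝ) * φ x ≤ m :=
    fun x hx n m h =>
      mv_rep_bound A B hA hB h0A hAoplus hAneg φ hmaps hφ0 hφoplus hφneg hx n m h
  have hid : ∀ x ∈ A, φ x = x := by
    intro x hx
    have hx01 := hA hx
    have hφx01 := hB (hmaps x hx)
    refine le_antisymm ?_ ?_
    · -- φ x ≤ x
      by_contra hcon
      push_neg at hcon
      obtain ⟨q, hq1, hq2⟩ := exists_rat_btwn hcon
      have hq0 : 0 ≤ q := by
        have : (0:ℝ) ≤ (q:ℝ) := le_of_lt (lt_of_le_of_lt hx01.1 hq1)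
        exact_mod_cast this
      have hqnum : ((q.num.toNat : ℝ)) = (q : ℝ) * q.den := by
        have h1 : (q.num : ℝ) = (q : ℝ) * q.den := by
          rw [Rat.cast_def]
          field_simp
        have h2 : ((q.num.toNat : ℝ)) = (q.num : ℝ) := by
          exact_mod_cast Int.toNat_of_nonneg (Rat.num_nonneg.2 hq0)
        rw [h2, h1]
      have hden : (0:ℝ) < q.den := by exact_mod_cast q.pos
      have hle : (q.den : ℝ) * x ≤ q.num.toNat := by
        rw [hqnum]
        nlinarith [le_of_lt hq1]
      have := key x hx q.den q.num.toNat hle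
      rw [hqnum] at this
      nlinarith
    · -- x ≤ φ x
      by_contra hcon
      push_neg at hcon
      obtain ⟨q, hq1, hq2⟩ := exists_rat_btwn hcon
      have hq0 : 0 ≤ q := by
        have : (0:ℝ) ≤ (q:ℝ) := le_of_lt (lt_of_le_of_lt hφx01.1 hq1)
        exact_mod_cast this
      have hqnum : ((q.num.toNat : ℝ)) = (q : ℝ) * q.den := by
        have h1 : (q.num : ℝ) = (q : ℝ) * q.den := by
          rw [Rat.cast_def]
          field_simp
        have h2 : ((q.num.toNat : ℝ)) = (q.num : ℝ) := by
          exact_mod_cast Int.toNat_of_nonneg (Rat.num_nonneg.2 hq0)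
        rw [h2, h1]
      have hden : (0:ℝ) < q.den := by exact_mod_cast q.pos
      have hmn : q.num.toNat ≤ q.den := by
        have hq1' : (q:ℝ) ≤ 1 := le_of_lt (lt_of_lt_of_le hq2 hx01.2)
        have : ((q.num.toNat : ℝ)) ≤ (q.den : ℝ) := by
          rw [hqnum]; nlinarith
        exact_mod_cast this
      have hle : (q.den : ℝ) * (1 - x) ≤ ((q.den - q.num.toNat : ℕ) : ℝ) := by
        rw [Nat.cast_sub hmn, hqnum]
        nlinarith [le_of_lt hq2]
      have := key (1 - x) (hAneg x hx) q.den (q.den - q.num.toNat) hle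
      rw [hφneg x hx, Nat.cast_sub hmn, hqnum] at this
      nlinarith
  refine ⟨?_, hid⟩
  apply Set.Subset.antisymm
  · intro x hx
    rw [← hid x hx]; exact hmaps x hx
  · intro y hy
    obtain ⟨x, hx, hxy⟩ := hbij.surjOn hy
    rw [← hxy, hid x hx]; exact hx
end

section
/- Let G₁ and G₂ be subgroups of (ℝ, +) both containing a nonzero element g₀, and let φ : G₁ → G₂ be an injective order-preserving group homomorphism with φ(g₀) = g₀. Then G₁ ⊆ G₂ and φ is the inclusion map. If φ is also surjective, then G₁ = G₂. -/
/-- If `G₁, G₂` are subgroups of `(ℝ,+)` containing a common nonzero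
element `g₀` and `φ : G₁ → G₂` is an injective order-preserving group homomorphism
with `φ(g₀) = g₀`, then `G₁ ⊆ G₂` and `φ` is the inclusion; if `φ` is moreover
surjective onto `G₂`, then `G₁ = G₂`. -/
theorem subgroups_of_real_hom_eq
    (G₁ G₂ : AddSubgroup ℝ) (g₀ : ℝ) (hg₀ : g₀ ≠ 0)
    (hg₁ : g₀ ∈ G₁) (hg₂ : g₀ ∈ G₂)
    (φ : ℝ → ℝ)
    (hmaps : Set.MapsTo φ (G₁ : Set ℝ) (G₂ : Set ℝ))
    (hadd : ∀ x ∈ G₁, ∀ y ∈ G₁, φ (x + y) = φ x + φ y)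
    (hmono : ∀ x ∈ G₁, ∀ y ∈ G₁, x ≤ y → φ x ≤ φ y)
    (hinj : Set.InjOn φ (G₁ : Set ℝ))
    (hfix : φ g₀ = g₀) :
    ((G₁ : Set ℝ) ⊆ (G₂ : Set ℝ) ∧ ∀ x ∈ G₁, φ x = x) ∧
    (Set.SurjOn φ (G₁ : Set ℝ) (G₂ : Set ℝ) → G₁ = G₂) := by
  have hφ0 : φ 0 = 0 := by
    have h := hadd 0 G₁.zero_mem 0 G₁.zero_mem
    rw [add_zero] at h; linarith
  let ψ : G₁ →+ ℝ :=
    { toFun := fun a => φ a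
      map_zero' := hφ0
      map_add' := fun a b => hadd a a.2 b b.2 }
  have hsm : ∀ (n : ℤ) (x : ℝ), x ∈ G₁ → φ (n • x) = n • φ x := by
    intro n x hx
    have h := map_zsmul ψ n ⟨x, hx⟩
    simpa [ψ, zsmul_eq_mul] using h
  have hstrict : ∀ a ∈ G₁, ∀ b ∈ G₁, a < b → φ a < φ b := by
    intro a ha b hb hab
    exact lt_of_le_of_ne (hmono a ha b hb hab.le)
      (fun h => absurd (hinj ha hb h) hab.ne)
  obtain ⟨g, hgG, hgpos, hgfix⟩ : ∃ g, g ∈ G₁ ∧ 0 < g ∧ φ g = g := by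
    rcases hg₀.lt_or_gt with h | h
    · refine ⟨-g₀, G₁.neg_mem hg₁, by linarith, ?_⟩
      have h1 := hsm (-1) g₀ hg₁
      simpa [hfix] using h1
    · exact ⟨g₀, hg₁, h, hfix⟩
  have hfixall : ∀ x ∈ G₁, φ x = x := by
    intro x hx
    by_contra hne
    rcases lt_or_gt_of_ne hne with h | h
    · -- φ x < x
      have hdiv : φ x / g < x / g := by gcongr
      obtain ⟨q, hq1, hq2⟩ := exists_rat_btwn hdiv
      have hgx : φ x < q * g := (div_lt_iff₀ hgpos).mp hq1
      have hxg : (q : ℝ) * g < x := (lt_div_iff₀ hgpos).mp hq2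
      have hdenpos : (0:ℝ) < (q.den : ℝ) := by positivity
      have hpd : (q : ℝ) * (q.den : ℝ) = (q.num : ℝ) := by
        have : ((q * (q.den : ℚ) : ℚ) : ℝ) = ((q.num : ℚ) : ℝ) := by
          rw [Rat.mul_den_eq_num]
        push_cast at this
        linarith
      have h1 : (q.num : ℝ) * g < (q.den : ℝ) * x := by nlinarith
      have hmem1 : (q.num : ℝ) * g ∈ G₁ := by
        have := G₁.zsmul_mem hgG q.num
        simpa [zsmul_eq_mul] using this
      have hmem2 : (q.den : ℝ) * x ∈ G₁ := by
        have := G₁.zsmul_mem hx (q.den : ℤ)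
        simpa [zsmul_eq_mul] using this
      have h2 := hstrict _ hmem1 _ hmem2 h1
      have e1 : φ ((q.num : ℝ) * g) = (q.num : ℝ) * g := by
        have := hsm q.num g hgG
        simpa [zsmul_eq_mul, hgfix] using this
      have e2 : φ ((q.den : ℝ) * x) = (q.den : ℝ) * φ x := by
        have := hsm (q.den : ℤ) x hx
        simpa [zsmul_eq_mul] using this
      rw [e1, e2] at h2
      nlinarith
    · -- x < φ x
      have hdiv : x / g < φ x / g := by gcongr
      obtain ⟨q, hq1, hq2⟩ := exists_rat_btwn hdiv
      have hgx : x < q * g := (div_lt_iff₀ hgpos).mp hq1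
      have hxg : (q : ℝ) * g < φ x := (lt_div_iff₀ hgpos).mp hq2
      have hdenpos : (0:ℝ) < (q.den : ℝ) := by positivity
      have hpd : (q : ℝ) * (q.den : ℝ) = (q.num : ℝ) := by
        have : ((q * (q.den : ℚ) : ℚ) : ℝ) = ((q.num : ℚ) : ℝ) := by
          rw [Rat.mul_den_eq_num]
        push_cast at this
        linarith
      have h1 : (q.den : ℝ) * x < (q.num : ℝ) * g := by nlinarith
      have hmem1 : (q.num : ℝ) * g ∈ G₁ := by
        have := G₁.zsmul_mem hgG q.num
        simpa [zsmul_eq_mul] using this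
      have hmem2 : (q.den : ℝ) * x ∈ G₁ := by
        have := G₁.zsmul_mem hx (q.den : ℤ)
        simpa [zsmul_eq_mul] using this
      have h2 := hstrict _ hmem2 _ hmem1 h1
      have e1 : φ ((q.num : ℝ) * g) = (q.num : ℝ) * g := by
        have := hsm q.num g hgG
        simpa [zsmul_eq_mul, hgfix] using this
      have e2 : φ ((q.den : ℝ) * x) = (q.den : ℝ) * φ x := by
        have := hsm (q.den : ℤ) x hx
        simpa [zsmul_eq_mul] using this
      rw [e1, e2] at h2
      nlinarith
  refine ⟨⟨fun x hx => by have := hmaps hx; rwa [hfixall x hx] at this, hfixall⟩, ?_⟩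
  intro hsurj
  apply le_antisymm
  · intro x hx
    have := hmaps hx
    rwa [hfixall x hx] at this
  · intro y hy
    obtain ⟨x, hxG, hxy⟩ := hsurj hy
    rw [hfixall x hxG] at hxy
    rwa [← hxy]
end

section
/- Let (R, 1_R) be a unital Riesz space such that every strictly positive element of R is a strong unit. Then (R, 1_R) is isomorphic as a unital Riesz space to (ℝ, 1). -/
/-- A unital Riesz space `(R,1_R)` in which every strictly positive
element is a strong unit is isomorphic, as a unital Riesz space (a linear order
isomorphism), to `(ℝ, 1)`. -/
theorem unital_riesz_space_simple_iso_real
    {R : Type*}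
    [Lattice R] [AddCommGroup R] [CovariantClass R R (· + ·) (· ≤ ·)]
    [Module ℝ R] [PosSMulMono ℝ R]
    (oneR : R) (honeR : 0 < oneR)
    (hRstrong : ∀ r : R, ∃ n : ℕ, 1 ≤ n ∧ r ≤ n • oneR)
    (hRsimple : ∀ e : R, 0 < e → ∀ r : R, ∃ n : ℕ, 1 ≤ n ∧ r ≤ n • e) :
    ∃ f : R ≃ₗ[ℝ] ℝ, (∀ x y : R, x ≤ y ↔ f x ≤ f y) ∧ f oneR = 1 := by
  -- monotonicity of scalar action on oneR
  have hsm : ∀ t s : ℝ, t ≤ s → t • oneR ≤ s • oneR := by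
    intro t s h
    have h0 : (0:R) ≤ (s - t) • oneR := smul_nonneg (by linarith) honeR.le
    have h1 : t • oneR + 0 ≤ t • oneR + (s - t) • oneR := add_le_add le_rfl h0
    have hts : t + (s - t) = s := by ring
    rwa [add_zero, ← add_smul, hts] at h1
  have hrev : ∀ t s : ℝ, t • oneR ≤ s • oneR → t ≤ s := by
    intro t s h
    by_contra hlt
    push_neg at hlt
    have h0 : (t - s) • oneR ≤ 0 := by
      have := sub_nonpos.mpr h
      rwa [← sub_smul] at this
    have h1 : (t - s)⁻¹ • ((t - s) • oneR) ≤ (t - s)⁻¹ • (0:R) :=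
      smul_le_smul_of_nonneg_left h0 (le_of_lt (inv_pos.mpr (by linarith)))
    rw [smul_smul, inv_mul_cancel₀ (by linarith), one_smul, smul_zero] at h1
    exact absurd h1 honeR.not_ge
  have hinj : ∀ t s : ℝ, t • oneR = s • oneR → t = s := fun t s h =>
    le_antisymm (hrev _ _ h.le) (hrev _ _ h.ge)
  -- Archimedean property from simplicity
  have arch : ∀ x : R, (∀ ε : ℝ, 0 < ε → x ≤ ε • oneR) → x ≤ 0 := by
    intro x hx
    set e := x ⊔ 0 with he
    have he0 : (0:R) ≤ e := le_sup_right
    rcases lt_or_eq_of_le he0 with hpos | heq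
    · exfalso
      obtain ⟨n, hn1, hne⟩ := hRsimple e hpos oneR
      have hnpos : (0:ℝ) < n := by exact_mod_cast hn1
      have h1 : x ≤ (1/(2*(n:ℝ))) • oneR := hx (1/(2*(n:ℝ))) (by positivity)
      have h2 : e ≤ (1/(2*(n:ℝ))) • oneR :=
        sup_le h1 (smul_nonneg (by positivity) honeR.le)
      have h3 : (1/(2*(n:ℝ))) • oneR ≤ (1/(2*(n:ℝ))) • ((n:ℝ) • e) := by
        apply smul_le_smul_of_nonneg_left _ (by positivity)
        rw [Nat.cast_smul_eq_nsmul]; exact hne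
      rw [smul_smul] at h3
      have hcalc : (1/(2*(n:ℝ))) * n = 1/2 := by field_simp
      rw [hcalc] at h3
      have h4 : e ≤ (1/2 : ℝ) • e := h2.trans h3
      have h6 : (2:ℝ) • e ≤ (2:ℝ) • ((1/2:ℝ) • e) :=
        smul_le_smul_of_nonneg_left h4 (by norm_num)
      rw [smul_smul] at h6
      have h7 : ((2:ℝ) * (1/2)) = 1 := by norm_num
      rw [h7, one_smul, two_smul] at h6
      exact absurd (add_le_iff_nonpos_left.mp h6) hpos.not_ge
    · have hxe : x ≤ e := le_sup_left
      rw [← heq] at hxe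
      exact hxe
  -- the set of real upper coefficients
  set S : R → Set ℝ := fun r => {t | r ≤ t • oneR} with hS
  have hne : ∀ r, (S r).Nonempty := by
    intro r
    obtain ⟨n, _, hn⟩ := hRstrong r
    refine ⟨(n:ℝ), ?_⟩
    show r ≤ (n:ℝ) • oneR
    rw [Nat.cast_smul_eq_nsmul]; exact hn
  have hbdd : ∀ r, BddBelow (S r) := by
    intro r
    obtain ⟨m, _, hm⟩ := hRstrong (-r)
    refine ⟨-(m:ℝ), ?_⟩
    intro t ht
    have hml : (-(m:ℝ)) • oneR ≤ r := by
      have : -r ≤ (m:ℝ) • oneR := by rw [Nat.cast_smul_eq_nsmul]; exact hm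
      have := neg_le.mp this
      rwa [← neg_smul] at this
    exact hrev _ _ (hml.trans ht)
  set φ : R → ℝ := fun r => sInf (S r) with hφ
  have hspec : ∀ r, r = φ r • oneR := by
    intro r
    have hle : r ≤ φ r • oneR := by
      have hx : ∀ ε : ℝ, 0 < ε → r - φ r • oneR ≤ ε • oneR := by
        intro ε hε
        have hlt : sInf (S r) < φ r + ε := by simp only [hφ]; linarith
        obtain ⟨t, ht, htlt⟩ := exists_lt_of_csInf_lt (hne r) hlt
        have : r ≤ (φ r + ε) • oneR := le_trans ht (hsm _ _ htlt.le)
        rw [add_smul] at this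
        exact sub_le_iff_le_add'.mpr this
      have := arch _ hx
      exact sub_nonpos.mp this
    have hge : φ r • oneR ≤ r := by
      set z := φ r • oneR - r with hz
      have hz0 : (0:R) ≤ z := sub_nonneg.mpr hle
      rcases lt_or_eq_of_le hz0 with hzpos | hzeq
      · exfalso
        obtain ⟨n, hn1, hnz⟩ := hRsimple z hzpos oneR
        have hnpos : (0:ℝ) < n := by exact_mod_cast hn1
        have h1 : oneR ≤ (n:ℝ) • z := by rw [Nat.cast_smul_eq_nsmul]; exact hnz
        have h2 : ((n:ℝ)⁻¹) • oneR ≤ ((n:ℝ)⁻¹) • ((n:ℝ) • z) :=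
          smul_le_smul_of_nonneg_left h1 (le_of_lt (inv_pos.mpr hnpos))
        rw [smul_smul, inv_mul_cancel₀ (ne_of_gt hnpos), one_smul] at h2
        -- r ≤ (φ r - n⁻¹) • oneR
        have h3 : r ≤ (φ r - (n:ℝ)⁻¹) • oneR := by
          rw [sub_smul]
          have := sub_le_sub_left h2 (φ r • oneR)
          rw [hz] at this
          simpa using this
        have h4 : sInf (S r) ≤ φ r - (n:ℝ)⁻¹ := csInf_le (hbdd r) h3
        have : (0:ℝ) < (n:ℝ)⁻¹ := inv_pos.mpr hnpos
        simp only [hφ] at h4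
        linarith
      · have h0 : φ r • oneR - r = 0 := hzeq.symm
        exact le_of_eq (sub_eq_zero.mp h0)
    exact le_antisymm hle hge
  have hadd : ∀ x y : R, φ (x + y) = φ x + φ y := by
    intro x y
    apply hinj
    rw [← hspec (x + y), add_smul, ← hspec x, ← hspec y]
  have hsmul : ∀ (c : ℝ) (x : R), φ (c • x) = c * φ x := by
    intro c x
    apply hinj
    rw [← hspec (c • x), mul_smul, ← hspec x]
  have horder : ∀ x y : R, x ≤ y ↔ φ x ≤ φ y := by
    intro x y
    constructor
    · intro h
      apply hrev
      rw [← hspec x, ← hspec y]; exact h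
    · intro h
      have := hsm _ _ h
      rwa [← hspec x, ← hspec y] at this
  have hone : φ oneR = 1 := by
    apply hinj
    rw [← hspec oneR, one_smul]
  exact ⟨{ toFun := φ
           map_add' := hadd
           map_smul' := hsmul
           invFun := fun t => t • oneR
           left_inv := fun r => (hspec r).symm
           right_inv := fun t => hinj _ _ (hspec (t • oneR)).symm },
         horder, hone⟩
end

section
/- Every MV-algebra homomorphism s from Γ(ℝⁿ, 1) to Γ(ℝᵐ, 1) is of the form s(x₁,...,xₙ) = (x_{τ(1)}, ..., x_{τ(m)}) for a unique function τ : {1,...,m} → {1,...,n}. Consequently there are exactly nᵐ such homomorphisms. -/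
/-- The MV-algebra `Γ(ℝᵏ, 1) = [0,1]ᵏ`. -/
def Cube (k : ℕ) : Type := {x : Fin k → ℝ // ∀ i, 0 ≤ x i ∧ x i ≤ 1}

namespace Cube

/-- MV-sum `x ⊕ y = (x + y) ∧ 1`, coordinatewise. -/
def oplus {k : ℕ} (x y : Cube k) : Cube k :=
  ⟨fun i => min (x.1 i + y.1 i) 1, fun i =>
    ⟨le_min (add_nonneg (x.2 i).1 (y.2 i).1) zero_le_one, min_le_right _ _⟩⟩

/-- MV-negation `¬x = 1 - x`, coordinatewise. -/
def compl {k : ℕ} (x : Cube k) : Cube k :=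
  ⟨fun i => 1 - x.1 i, fun i => ⟨by simp only []; linarith [(x.2 i).2], by simp only []; linarith [(x.2 i).1]⟩⟩

/-- The bottom element. -/
def bot (k : ℕ) : Cube k := ⟨fun _ => 0, fun _ => ⟨le_refl _, zero_le_one⟩⟩

/-- The top element. -/
def top (k : ℕ) : Cube k := ⟨fun _ => 1, fun _ => ⟨zero_le_one, le_refl _⟩⟩

end Cube

/-- An MV-algebra homomorphism `Γ(ℝⁿ,1) → Γ(ℝᵐ,1)`. -/
def IsMVHom {n m : ℕ} (s : Cube n → Cube m) : Prop :=
  s (Cube.bot n) = Cube.bot m ∧ s (Cube.top n) = Cube.top m ∧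
  (∀ x y, s (x.oplus y) = (s x).oplus (s y)) ∧
  (∀ x, s x.compl = (s x).compl)


namespace MVAux

open Finset

variable {n : ℕ}

lemma cube_ext {x y : Cube n} (h : ∀ i, x.1 i = y.1 i) : x = y :=
  Subtype.ext (funext h)

/-- Restriction of a cube element to a finite set of coordinates. -/
def restr (x : Cube n) (S : Finset (Fin n)) : Cube n :=
  ⟨fun k => if k ∈ S then x.1 k else 0, fun k => by
    dsimp only
    split
    · exact x.2 k
    · exact ⟨le_rfl, zero_le_one⟩⟩

/-- Clamped "single coordinate" element. -/
def sing (i : Fin n) (t : ℝ) : Cube n :=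
  ⟨fun k => if k = i then min (max t 0) 1 else 0, fun k => by
    dsimp only
    split
    · exact ⟨le_min (le_max_right _ _) zero_le_one, min_le_right _ _⟩
    · exact ⟨le_rfl, zero_le_one⟩⟩

lemma sing_val (i : Fin n) (t : ℝ) (h0 : 0 ≤ t) (h1 : t ≤ 1) (k : Fin n) :
    (sing i t).1 k = if k = i then t else 0 := by
  simp only [sing]
  rw [max_eq_left h0, min_eq_left h1]

/-- Bundle of hypotheses on a coordinate function of a homomorphism. -/
structure Good (n : ℕ) (f : Cube n → ℝ) : Prop where
  bdd : ∀ x, 0 ≤ f x ∧ f x ≤ 1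
  htop : f (Cube.top n) = 1
  hop : ∀ x y, f (x.oplus y) = min (f x + f y) 1
  hcompl : ∀ x, f x.compl = 1 - f x

variable {f : Cube n → ℝ}

lemma Good.hbot (hf : Good n f) : f (Cube.bot n) = 0 := by
  have h : (Cube.top n).compl = Cube.bot n :=
    cube_ext fun i => by simp [Cube.compl, Cube.top, Cube.bot]
  have := hf.hcompl (Cube.top n)
  rw [h, hf.htop] at this
  linarith

lemma Good.add (hf : Good n f) (x y : Cube n) (h : ∀ i, x.1 i + y.1 i ≤ 1) :
    f x + f y ≤ 1 ∧ f (x.oplus y) = f x + f y := by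
  have ht : x.compl.oplus y.compl = Cube.top n := cube_ext fun i => by
    simp only [Cube.oplus, Cube.compl, Cube.top]
    exact min_eq_right (by linarith [h i])
  have h2 : (1 : ℝ) = min (1 - f x + (1 - f y)) 1 := by
    have := hf.hop x.compl y.compl
    rw [ht, hf.htop, hf.hcompl, hf.hcompl] at this
    exact this
  have hle : f x + f y ≤ 1 := by
    by_contra hlt
    push_neg at hlt
    rw [min_eq_left (by linarith)] at h2
    linarith
  exact ⟨hle, by rw [hf.hop, min_eq_left hle]⟩

lemma Good.mono (hf : Good n f) {x y : Cube n} (h : ∀ i, x.1 i ≤ y.1 i) : f x ≤ f y := by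
  set z : Cube n := ⟨fun i => y.1 i - x.1 i, fun i =>
    ⟨by dsimp only; linarith [h i], by dsimp only; linarith [(x.2 i).1, (y.2 i).2]⟩⟩ with hz
  have hxz : x.oplus z = y := cube_ext fun i => by
    simp only [Cube.oplus, hz]
    rw [show x.1 i + (y.1 i - x.1 i) = y.1 i by ring]
    exact min_eq_left (y.2 i).2
  have hsum : ∀ i, x.1 i + z.1 i ≤ 1 := fun i => by
    simp only [hz]
    linarith [(y.2 i).2]
  have := (hf.add x z hsum).2
  rw [hxz] at this
  linarith [(hf.bdd z).1]

/-- Cauchy functional equation on `[0,1]` with monotonicity. -/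
lemma cauchy01 (g : ℝ → ℝ)
    (hadd : ∀ a b, 0 ≤ a → 0 ≤ b → a + b ≤ 1 → g (a + b) = g a + g b)
    (hmono : ∀ a b, 0 ≤ a → a ≤ b → b ≤ 1 → g a ≤ g b)
    (h1 : g 1 = 1) :
    ∀ t, 0 ≤ t → t ≤ 1 → g t = t := by
  have g0 : g 0 = 0 := by
    have := hadd 0 0 le_rfl le_rfl (by norm_num)
    simp at this
    linarith
  have step : ∀ (N : ℕ), 0 < N → ∀ (k : ℕ), k ≤ N →
      g ((k : ℝ) / N) = (k : ℝ) * g (1 / N) := by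
    intro N hN
    intro k
    induction k with
    | zero => intro _; simp [g0]
    | succ k ih =>
      intro hk
      have hkN : k ≤ N := Nat.le_of_succ_le hk
      have hNpos : (0 : ℝ) < N := by exact_mod_cast hN
      have h1' : g ((k : ℝ) / N + 1 / N) = g ((k : ℝ) / N) + g (1 / N) := by
        apply hadd
        · positivity
        · positivity
        · rw [← add_div, div_le_one hNpos]
          exact_mod_cast hk
      have heq : ((k : ℝ) + 1) / N = (k : ℝ) / N + 1 / N := by ring
      rw [Nat.cast_succ, heq, h1', ih hkN]
      ring
  have gN : ∀ N : ℕ, 0 < N → g (1 / N) = 1 / N := by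
    intro N hN
    have hNpos : (0 : ℝ) < N := by exact_mod_cast hN
    have := step N hN N le_rfl
    rw [div_self (ne_of_gt hNpos), h1] at this
    field_simp
    linarith
  have grat : ∀ (k N : ℕ), 0 < N → k ≤ N → g ((k : ℝ) / N) = (k : ℝ) / N := by
    intro k N hN hk
    rw [step N hN k hk, gN N hN]
    ring
  intro t ht0 ht1
  rcases eq_or_lt_of_le ht1 with heq | hlt
  · rw [heq, h1]
  · have key : ∀ N : ℕ, 0 < N → |g t - t| ≤ 1 / N := by
      intro N hN
      have hNpos : (0 : ℝ) < N := by exact_mod_cast hN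
      set k : ℕ := ⌊t * N⌋₊ with hk
      have hk1 : (k : ℝ) ≤ t * N := Nat.floor_le (by positivity)
      have hk2 : t * N < (k : ℝ) + 1 := Nat.lt_floor_add_one _
      have hkN : (k : ℝ) < N := lt_of_le_of_lt hk1 (by nlinarith)
      have hkN' : k ≤ N := by
        have : (k : ℝ) ≤ N := le_of_lt hkN
        exact_mod_cast this
      have hk1N : k + 1 ≤ N := by
        have : (k : ℝ) + 1 ≤ N := by exact_mod_cast Nat.succ_le_of_lt (by exact_mod_cast hkN)
        exact_mod_cast this
      have hlow : (k : ℝ) / N ≤ g t := by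
        rw [← grat k N hN hkN']
        apply hmono _ _ (by positivity) _ ht1
        rw [div_le_iff₀ hNpos]
        linarith
      have hhigh : g t ≤ ((k : ℝ) + 1) / N := by
        have h' : g t ≤ g (((k : ℝ) + 1) / N) := by
          apply hmono _ _ ht0
          · rw [le_div_iff₀ hNpos]
            linarith
          · rw [div_le_one hNpos]
            exact_mod_cast hk1N
        have h'' : g (((k : ℝ) + 1) / N) = ((k : ℝ) + 1) / N := by
          have := grat (k + 1) N hN hk1N
          push_cast at this
          exact this
        linarith
      rw [abs_le]
      constructor
      · have : t ≤ ((k : ℝ) + 1) / N := by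
          rw [le_div_iff₀ hNpos]; linarith
        have h3 : ((k : ℝ) + 1) / N - (k : ℝ) / N = 1 / N := by ring
        nlinarith [hlow]
      · have : (k : ℝ) / N ≤ t := by
          rw [div_le_iff₀ hNpos]; linarith
        have h3 : ((k : ℝ) + 1) / N = (k : ℝ) / N + 1 / N := by ring
        linarith [hhigh]
    by_contra hne
    have habs : 0 < |g t - t| := by
      rcases lt_or_gt_of_ne (fun h : g t = t => hne h) with h | h
      · rw [abs_of_neg (by linarith)]; linarith
      · rw [abs_of_pos (by linarith)]; linarith
    obtain ⟨N, hNlt⟩ := exists_nat_one_div_lt habs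
    have := key (N + 1) (Nat.succ_pos N)
    push_cast at this hNlt
    linarith

lemma Good.sing_c01 (hf : Good n f) (i : Fin n) :
    f (sing i 1) = 0 ∨ f (sing i 1) = 1 := by
  have hss : (sing i 1).oplus (sing i 1) = sing i 1 := cube_ext fun k => by
    rw [Cube.oplus]
    simp only
    rw [sing_val i 1 zero_le_one le_rfl k]
    split
    · norm_num
    · norm_num
  have := hf.hop (sing i 1) (sing i 1)
  rw [hss] at this
  set c := f (sing i 1)
  rcases le_or_gt (c + c) 1 with h | h
  · rw [min_eq_left h] at this
    left; linarith
  · rw [min_eq_right (le_of_lt h)] at this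
    right; exact this

lemma Good.sing_smul (hf : Good n f) (i : Fin n) (t : ℝ) (h0 : 0 ≤ t) (h1 : t ≤ 1) :
    f (sing i t) = t * f (sing i 1) := by
  rcases hf.sing_c01 i with hc | hc
  · have hle : f (sing i t) ≤ f (sing i 1) := by
      apply hf.mono
      intro k
      rw [sing_val i t h0 h1 k, sing_val i 1 zero_le_one le_rfl k]
      split
      · exact h1
      · exact le_rfl
    have hge := (hf.bdd (sing i t)).1
    rw [hc, mul_zero]
    linarith
  · have key : ∀ u, 0 ≤ u → u ≤ 1 → f (sing i u) = u := by
      apply cauchy01 (fun u => f (sing i u))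
      · intro a b ha hb hab
        have hab' : (sing i a).oplus (sing i b) = sing i (a + b) := cube_ext fun k => by
          rw [Cube.oplus]
          simp only
          rw [sing_val i a ha (by linarith) k, sing_val i b hb (by linarith) k,
            sing_val i (a + b) (by linarith) hab k]
          split
          · exact min_eq_left hab
          · norm_num
        have := (hf.add (sing i a) (sing i b) (fun k => by
          rw [sing_val i a ha (by linarith) k, sing_val i b hb (by linarith) k]
          split
          · exact hab
          · norm_num)).2
        rw [hab'] at this
        exact this
      · intro a b ha hab hb1
        apply hf.mono
        intro k
        rw [sing_val i a (le_trans ha hab |>.trans (le_refl _) |> fun _ => ha) (le_trans hab hb1) k,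
          sing_val i b (le_trans ha hab) hb1 k]
        split
        · exact hab
        · exact le_rfl
      · exact hc
    rw [key t h0 h1, hc, mul_one]

lemma restr_singleton (x : Cube n) (i : Fin n) : restr x {i} = sing i (x.1 i) :=
  cube_ext fun k => by
    rw [restr, sing]
    simp only [Finset.mem_singleton]
    rw [max_eq_left (x.2 i).1, min_eq_left (x.2 i).2]
    split <;> rename_i h
    · rw [h]
    · rfl

lemma restr_univ (x : Cube n) : restr x Finset.univ = x :=
  cube_ext fun k => by simp [restr]

lemma restr_empty (x : Cube n) : restr x ∅ = Cube.bot n :=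
  cube_ext fun k => by simp [restr, Cube.bot]

lemma Good.restr_sum (hf : Good n f) (x : Cube n) (S : Finset (Fin n)) :
    f (restr x S) = ∑ i ∈ S, x.1 i * f (sing i 1) := by
  classical
  induction S using Finset.induction_on with
  | empty => rw [restr_empty, hf.hbot, Finset.sum_empty]
  | insert _ _ hiS _ =>
    rename_i i S ih
    have hsplit : restr x (insert i S) = (restr x {i}).oplus (restr x S) :=
      cube_ext fun k => by
        simp only [Cube.oplus, restr, Finset.mem_insert, Finset.mem_singleton]
        by_cases hki : k = i
        · subst hki
          simp [hiS, min_eq_left (x.2 k).2]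
        · by_cases hkS : k ∈ S
          · simp [hki, hkS, min_eq_left (x.2 k).2]
          · simp [hki, hkS]
    have hbound : ∀ k, (restr x {i}).1 k + (restr x S).1 k ≤ 1 := by
      intro k
      simp only [restr, Finset.mem_singleton]
      by_cases hki : k = i
      · subst hki
        simp [hiS, (x.2 k).2]
      · by_cases hkS : k ∈ S
        · simp [hki, hkS, (x.2 k).2]
        · simp [hki, hkS]
    have := (hf.add (restr x {i}) (restr x S) hbound).2
    rw [hsplit, this, ih, Finset.sum_insert hiS, restr_singleton,
      hf.sing_smul i (x.1 i) (x.2 i).1 (x.2 i).2]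

/-- Classification of `Good` functions: they are coordinate projections. -/
lemma classify (hf : Good n f) : ∃! i : Fin n, ∀ x : Cube n, f x = x.1 i := by
  classical
  set c : Fin n → ℝ := fun i => f (sing i 1) with hc
  have hfx : ∀ x : Cube n, f x = ∑ i, x.1 i * c i := by
    intro x
    conv_lhs => rw [← restr_univ x]
    exact hf.restr_sum x Finset.univ
  have hsum : ∑ i, c i = 1 := by
    have := hfx (Cube.top n)
    rw [hf.htop] at this
    simp only [Cube.top, one_mul] at this
    exact this.symm
  have hc0 : ∀ i, 0 ≤ c i := fun i => (hf.bdd _).1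
  have hc01 : ∀ i, c i = 0 ∨ c i = 1 := fun i => hf.sing_c01 i
  have hex : ∃ i, c i = 1 := by
    by_contra h
    push_neg at h
    have hz : ∀ i ∈ Finset.univ, c i = 0 := fun i _ => (hc01 i).resolve_right (h i)
    rw [Finset.sum_eq_zero hz] at hsum
    norm_num at hsum
  obtain ⟨i0, hi0⟩ := hex
  have hrest : ∀ j, j ≠ i0 → c j = 0 := by
    intro j hj
    rcases hc01 j with h | h
    · exact h
    · exfalso
      have hsub := Finset.sum_le_sum_of_subset_of_nonneg
        (Finset.subset_univ ({i0, j} : Finset (Fin n))) (fun i _ _ => hc0 i)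
      rw [Finset.sum_pair (Ne.symm hj)] at hsub
      rw [hi0, h] at hsub
      linarith [hsum ▸ hsub]
  refine ⟨i0, ?_, ?_⟩
  · intro x
    rw [hfx x, Finset.sum_eq_single i0
      (fun j _ hj => by rw [hrest j hj, mul_zero])
      (fun h => absurd (Finset.mem_univ i0) h), hi0, mul_one]
  · intro i' hi'
    have h1 := hi' (sing i0 1)
    rw [show f (sing i0 1) = 1 from hi0] at h1
    rw [sing_val i0 1 zero_le_one le_rfl i'] at h1
    by_contra hne
    rw [if_neg hne] at h1
    norm_num at h1

/-- The homomorphism associated to a map of indices. -/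
def sOf {n m : ℕ} (τ : Fin m → Fin n) : Cube n → Cube m :=
  fun x => ⟨fun j => x.1 (τ j), fun j => x.2 (τ j)⟩

lemma sOf_hom {n m : ℕ} (τ : Fin m → Fin n) : IsMVHom (sOf τ) := by
  refine ⟨?_, ?_, ?_, ?_⟩
  · exact cube_ext fun j => rfl
  · exact cube_ext fun j => rfl
  · intro x y; exact cube_ext fun j => rfl
  · intro x; exact cube_ext fun j => rfl

lemma key_classify {n m : ℕ} (s : Cube n → Cube m) (hs : IsMVHom s) :
    ∃! τ : Fin m → Fin n, ∀ (x : Cube n) (j : Fin m), (s x).1 j = x.1 (τ j) := by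
  obtain ⟨hb, ht, hop, hcm⟩ := hs
  have hgood : ∀ j : Fin m, Good n (fun x => (s x).1 j) := by
    intro j
    refine ⟨fun x => (s x).2 j, ?_, ?_, ?_⟩
    · rw [ht]; rfl
    · intro x y; rw [hop]; rfl
    · intro x; rw [hcm]; rfl
  have hcls : ∀ j : Fin m, ∃! i : Fin n, ∀ x : Cube n, (s x).1 j = x.1 i :=
    fun j => classify (hgood j)
  refine ⟨fun j => (hcls j).exists.choose, ?_, ?_⟩
  · intro x j
    exact (hcls j).exists.choose_spec x
  · intro τ' hτ'
    funext j
    exact (hcls j).unique (fun x => hτ' x j) ((hcls j).exists.choose_spec)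

end MVAux

/-- Every MV-algebra homomorphism `Γ(ℝⁿ,1) → Γ(ℝᵐ,1)` is of the form
`s(x₁,…,xₙ) = (x_{τ(1)},…,x_{τ(m)})` for a unique `τ : {1,…,m} → {1,…,n}`;
consequently there are exactly `nᵐ` such homomorphisms. -/
theorem mv_hom_cube_classification (n m : ℕ) :
    (∀ s : Cube n → Cube m, IsMVHom s →
      ∃! τ : Fin m → Fin n, ∀ (x : Cube n) (j : Fin m), (s x).1 j = x.1 (τ j)) ∧
    Nat.card {s : Cube n → Cube m // IsMVHom s} = n ^ m := by
  constructor
  · exact fun s hs => MVAux.key_classify s hs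
  · have hbij : Function.Bijective
        (fun τ : Fin m → Fin n => (⟨MVAux.sOf τ, MVAux.sOf_hom τ⟩ : {s : Cube n → Cube m // IsMVHom s})) := by
      constructor
      · intro τ τ' h
        have h' : ∀ (x : Cube n) (j : Fin m), x.1 (τ j) = x.1 (τ' j) := by
          intro x j
          have := congrArg (fun p : {s : Cube n → Cube m // IsMVHom s} => (p.1 x).1 j) h
          exact this
        funext j
        have := h' (MVAux.sing (τ j) 1) j
        rw [MVAux.sing_val (τ j) 1 zero_le_one le_rfl (τ j),
          MVAux.sing_val (τ j) 1 zero_le_one le_rfl (τ' j)] at this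
        rw [if_pos rfl] at this
        by_contra hne
        rw [if_neg (fun hh => hne hh.symm)] at this
        norm_num at this
      · rintro ⟨s, hs⟩
        obtain ⟨τ, hτ, _⟩ := MVAux.key_classify s hs
        exact ⟨τ, Subtype.ext (funext fun x => MVAux.cube_ext fun j => (hτ x j).symm)⟩
    rw [← Nat.card_eq_of_bijective _ hbij]
    simp [Nat.card_eq_fintype_card]
end

section
/- Let T be a nonempty compact Hausdorff space, M a pseudo MV-algebra, and s a (C(T), 1_T)-state-morphism on M. Then Ker(s) is a maximal ideal of M if and only if there exists a state-morphism s₀ : M → [0,1] such that s(x) = s₀(x) · 1_T for all x ∈ M. -/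
section

variable {G : Type*} [Lattice G] [AddGroup G]
  [CovariantClass G G (· + ·) (· ≤ ·)]
  [CovariantClass G G (Function.swap (· + ·)) (· ≤ ·)]

/-- Pairs of reals reachable from a pair by componentwise truncated doubling and negation. -/
private inductive MVReach : ℝ × ℝ → ℝ × ℝ → Prop
  | refl (p) : MVReach p p
  | dbl (p q) : MVReach (min (2 * p.1) 1, min (2 * p.2) 1) q → MVReach p q
  | neg (p q) : MVReach (1 - p.1, 1 - p.2) q → MVReach p q

private lemma mvreach_sep_aux : ∀ n : ℕ, ∀ α β : ℝ, 0 ≤ α → β ≤ 1 → α < β →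
    1 < 2 ^ n * (β - α) → ∃ γ : ℝ, 0 < γ ∧ MVReach (α, β) (0, γ) := by
  intro n
  induction n with
  | zero => intro α β h0 h1 hlt hgap; simp at hgap; linarith
  | succ n ih =>
    intro α β h0 h1 hlt hgap
    rcases le_or_gt β (1/2) with hb | hb
    · -- double
      obtain ⟨γ, hγ, hr⟩ := ih (2*α) (2*β) (by linarith) (by linarith) (by linarith)
        (by rw [pow_succ] at hgap; linarith)
      refine ⟨γ, hγ, MVReach.dbl _ _ ?_⟩
      have e1 : min (2*α) 1 = 2*α := min_eq_left (by linarith)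
      have e2 : min (2*β) 1 = 2*β := min_eq_left (by linarith)
      simpa [e1, e2] using hr
    · rcases le_or_gt (1/2) α with ha | ha
      · -- both ≥ 1/2 : x ↦ 2x-1
        obtain ⟨γ, hγ, hr⟩ := ih (2*α-1) (2*β-1) (by linarith) (by linarith) (by linarith)
          (by rw [pow_succ] at hgap; linarith)
        refine ⟨γ, hγ, MVReach.neg _ _ (MVReach.dbl _ _ (MVReach.neg _ _ ?_))⟩
        have e1 : min (2*(1-α)) 1 = 2*(1-α) := min_eq_left (by linarith)
        have e2 : min (2*(1-β)) 1 = 2*(1-β) := min_eq_left (by linarith)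
        have f1 : (1:ℝ) - 2*(1-α) = 2*α - 1 := by ring
        have f2 : (1:ℝ) - 2*(1-β) = 2*β - 1 := by ring
        simpa [e1, e2, f1, f2] using hr
      · -- α < 1/2 < β : separated
        refine ⟨2*β - 1, by linarith, MVReach.neg _ _ (MVReach.dbl _ _ (MVReach.neg _ _ ?_))⟩
        have e1 : min (2*(1-α)) 1 = 1 := min_eq_right (by linarith)
        have e2 : min (2*(1-β)) 1 = 2*(1-β) := min_eq_left (by linarith)
        have f2 : (1:ℝ) - 2*(1-β) = 2*β - 1 := by ring
        have : ((1:ℝ) - 1, 1 - 2*(1-β)) = ((0:ℝ), 2*β - 1) := by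
          rw [f2]; norm_num
        simpa [e1, e2, f2] using MVReach.refl ((0:ℝ), 2*β - 1)

private lemma mvreach_sep (α β : ℝ) (h0 : 0 ≤ α) (h1 : β ≤ 1) (hlt : α < β) :
    ∃ γ : ℝ, 0 < γ ∧ MVReach (α, β) (0, γ) := by
  obtain ⟨n, hn⟩ := pow_unbounded_of_one_lt (1/(β-α)) (by norm_num : (1:ℝ) < 2)
  exact mvreach_sep_aux n α β h0 h1 hlt (by rw [div_lt_iff₀ (by linarith)] at hn; linarith)

/-- The kernel of a pointwise state-like functional is an ideal. -/
private lemma isMVIdeal_ker (u : G) (hu : 0 ≤ u) (σ : G → ℝ)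
    (hσ0 : σ 0 = 0)
    (hrange : ∀ x : G, 0 ≤ x → x ≤ u → 0 ≤ σ x)
    (hoplus : ∀ x y : G, 0 ≤ x → x ≤ u → 0 ≤ y → y ≤ u →
      σ ((x + y) ⊓ u) = min (σ x + σ y) 1) :
    IsMVIdeal u {x : G | (0 ≤ x ∧ x ≤ u) ∧ σ x = 0} := by
  refine ⟨fun x hx => hx.1, ⟨0, ⟨le_refl 0, hu⟩, hσ0⟩, ?_, ?_⟩
  · intro a b hb ha0 hab
    obtain ⟨⟨hb0, hbu⟩, hσb⟩ := hb
    have hau : a ≤ u := le_trans hab hbu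
    set c := -a + b with hc
    have hc0 : 0 ≤ c := by
      have := add_le_add_right hab (-a)
      rwa [neg_add_cancel] at this
    have hcu : c ≤ u := by
      have h1 : -a + b ≤ 0 + b := add_le_add_left (neg_nonpos.mpr ha0) b
      rw [zero_add] at h1
      exact le_trans h1 hbu
    have hkey : (a + c) ⊓ u = b := by
      rw [hc, add_neg_cancel_left, inf_eq_left.mpr hbu]
    have := hoplus a c ha0 hau hc0 hcu
    rw [hkey, hσb] at this
    have hσa := hrange a ha0 hau
    have hσc := hrange c hc0 hcu
    refine ⟨⟨ha0, hau⟩, ?_⟩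
    rcases min_eq_iff.mp this.symm with ⟨h, _⟩ | ⟨h, _⟩ <;> linarith
  · intro a ha b hb
    obtain ⟨⟨ha0, hau⟩, hσa⟩ := ha
    obtain ⟨⟨hb0, hbu⟩, hσb⟩ := hb
    refine ⟨⟨le_inf (add_nonneg ha0 hb0) hu, inf_le_right⟩, ?_⟩
    rw [hoplus a b ha0 hau hb0 hbu, hσa, hσb]
    norm_num

/-- An ideal containing the kernel and an element of nonzero value is everything. -/
private lemma mvideal_eq_full (u : G) (hu : 0 ≤ u) (σ : G → ℝ)
    (hσ0 : σ 0 = 0)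
    (hrange : ∀ x : G, 0 ≤ x → x ≤ u → 0 ≤ σ x)
    (hoplus : ∀ x y : G, 0 ≤ x → x ≤ u → 0 ≤ y → y ≤ u →
      σ ((x + y) ⊓ u) = min (σ x + σ y) 1)
    (hnegr : ∀ x : G, 0 ≤ x → x ≤ u → σ (-x + u) = 1 - σ x)
    (J : Set G) (hJ : IsMVIdeal u J)
    (hker : {x : G | (0 ≤ x ∧ x ≤ u) ∧ σ x = 0} ⊆ J)
    (x : G) (hxJ : x ∈ J) (hσx : σ x ≠ 0) :
    J = {x : G | 0 ≤ x ∧ x ≤ u} := by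
  obtain ⟨hx0, hxu⟩ := hJ.1 hxJ
  have hσxpos : 0 < σ x := lt_of_le_of_ne (hrange x hx0 hxu) (Ne.symm hσx)
  -- iterates
  let f : ℕ → G := fun n => Nat.rec 0 (fun _ y => (y + x) ⊓ u) n
  have hf : ∀ n : ℕ, f n ∈ J ∧ (0 ≤ f n ∧ f n ≤ u) ∧ σ (f n) = min (n * σ x) 1 := by
    intro n
    induction n with
    | zero =>
      refine ⟨hker ⟨⟨le_refl 0, hu⟩, hσ0⟩, ⟨le_refl 0, hu⟩, ?_⟩
      simp [hσ0, f]
    | succ n ih =>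
      obtain ⟨hJn, ⟨h0n, hun⟩, hσn⟩ := ih
      have hmem : f (n+1) ∈ J := hJ.2.2.2 (f n) hJn x hxJ
      have hb : 0 ≤ f (n+1) ∧ f (n+1) ≤ u :=
        ⟨le_inf (add_nonneg h0n hx0) hu, inf_le_right⟩
      refine ⟨hmem, hb, ?_⟩
      have : σ (f (n+1)) = min (σ (f n) + σ x) 1 := hoplus (f n) x h0n hun hx0 hxu
      rw [this, hσn]
      rcases le_total ((n : ℝ) * σ x) 1 with h | h
      · rw [min_eq_left h]; push_cast; ring_nf
      · rw [min_eq_right h, min_eq_right (by linarith),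
          min_eq_right (by push_cast; nlinarith)]
  obtain ⟨n, hn⟩ : ∃ n : ℕ, 1 ≤ n * σ x := by
    obtain ⟨n, hn⟩ := exists_nat_ge (1 / σ x)
    exact ⟨n, by rw [div_le_iff₀ hσxpos] at hn; linarith⟩
  obtain ⟨hJn, ⟨h0n, hun⟩, hσn⟩ := hf n
  have hσn1 : σ (f n) = 1 := by rw [hσn, min_eq_right hn]
  set b := -(f n) + u with hb
  have hb0 : 0 ≤ b := by
    have := add_le_add_right hun (-(f n)); rwa [neg_add_cancel] at this
  have hbu : b ≤ u := by
    have h1 : -(f n) + u ≤ 0 + u := add_le_add_left (neg_nonpos.mpr h0n) u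
    rwa [zero_add] at h1
  have hσb : σ b = 0 := by rw [hb, hnegr (f n) h0n hun, hσn1, sub_self]
  have hbJ : b ∈ J := hker ⟨⟨hb0, hbu⟩, hσb⟩
  have huJ : u ∈ J := by
    have := hJ.2.2.2 (f n) hJn b hbJ
    rwa [hb, add_neg_cancel_left, inf_idem] at this
  apply Set.Subset.antisymm hJ.1
  intro y hy
  exact hJ.2.2.1 y u huJ hy.1 hy.2

/-- For a `(C(T),1_T)`-state-morphism `s` on a pseudo MV-algebra
`Γ(G,u)` (`T` a nonempty compact Hausdorff space), `Ker(s)` is a maximal ideal iff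
there is a real-valued state-morphism `s₀` with `s(x) = s₀(x) • 1_T` for all `x`. -/
theorem ct_state_morphism_maximal_kernel_iff_scalar
    {T : Type*} [TopologicalSpace T] [CompactSpace T] [T2Space T] [Nonempty T]
    (u : G) (hu : 0 ≤ u) (hustrong : ∀ g : G, ∃ n : ℕ, 1 ≤ n ∧ g ≤ n • u)
    (s : G → C(T, ℝ))
    (hs0 : s 0 = 0) (hs1 : s u = 1)
    (hrange : ∀ x : G, 0 ≤ x → x ≤ u → 0 ≤ s x ∧ s x ≤ 1)
    (hoplus : ∀ x y : G, 0 ≤ x → x ≤ u → 0 ≤ y → y ≤ u →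
      s ((x + y) ⊓ u) = (s x + s y) ⊓ 1)
    (hnegl : ∀ x : G, 0 ≤ x → x ≤ u → s (u + -x) = 1 - s x)
    (hnegr : ∀ x : G, 0 ≤ x → x ≤ u → s (-x + u) = 1 - s x) :
    IsMaximalMVIdeal u {x : G | (0 ≤ x ∧ x ≤ u) ∧ s x = 0} ↔
    ∃ s₀ : G → ℝ,
      s₀ 0 = 0 ∧ s₀ u = 1 ∧
      (∀ x : G, 0 ≤ x → x ≤ u → 0 ≤ s₀ x ∧ s₀ x ≤ 1) ∧
      (∀ x y : G, 0 ≤ x → x ≤ u → 0 ≤ y → y ≤ u →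
        s₀ ((x + y) ⊓ u) = min (s₀ x + s₀ y) 1) ∧
      (∀ x : G, 0 ≤ x → x ≤ u → s₀ (u + -x) = 1 - s₀ x) ∧
      (∀ x : G, 0 ≤ x → x ≤ u → s₀ (-x + u) = 1 - s₀ x) ∧
      (∀ x : G, 0 ≤ x → x ≤ u → s x = s₀ x • (1 : C(T, ℝ))) := by
  obtain ⟨t₀⟩ := ‹Nonempty T›
  -- pointwise facts
  have hpt0 : ∀ t : T, s 0 t = 0 := fun t => by rw [hs0]; rfl
  have hptu : ∀ t : T, s u t = 1 := fun t => by rw [hs1]; rfl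
  have hptrange : ∀ t : T, ∀ x : G, 0 ≤ x → x ≤ u → 0 ≤ s x t ∧ s x t ≤ 1 := by
    intro t x h0 h1
    exact ⟨(hrange x h0 h1).1 t, (hrange x h0 h1).2 t⟩
  have hptoplus : ∀ t : T, ∀ x y : G, 0 ≤ x → x ≤ u → 0 ≤ y → y ≤ u →
      s ((x + y) ⊓ u) t = min (s x t + s y t) 1 := by
    intro t x y hx0 hxu hy0 hyu
    rw [hoplus x y hx0 hxu hy0 hyu]
    simp [ContinuousMap.inf_apply]
  have hptnegl : ∀ t : T, ∀ x : G, 0 ≤ x → x ≤ u → s (u + -x) t = 1 - s x t := by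
    intro t x h0 h1
    rw [hnegl x h0 h1]; simp
  have hptnegr : ∀ t : T, ∀ x : G, 0 ≤ x → x ≤ u → s (-x + u) t = 1 - s x t := by
    intro t x h0 h1
    rw [hnegr x h0 h1]; simp
  constructor
  · -- forward direction
    intro hmax
    -- each pointwise kernel is an ideal, hence equals Ker s by maximality
    have hKideal : ∀ t : T, IsMVIdeal u {x : G | (0 ≤ x ∧ x ≤ u) ∧ s x t = 0} := by
      intro t
      exact isMVIdeal_ker u hu (fun x => s x t) (hpt0 t)
        (fun x h0 h1 => (hptrange t x h0 h1).1) (hptoplus t)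
    have hKeq : ∀ t : T,
        {x : G | (0 ≤ x ∧ x ≤ u) ∧ s x t = 0} = {x : G | (0 ≤ x ∧ x ≤ u) ∧ s x = 0} := by
      intro t
      have hsub : {x : G | (0 ≤ x ∧ x ≤ u) ∧ s x = 0} ⊆
          {x : G | (0 ≤ x ∧ x ≤ u) ∧ s x t = 0} := by
        intro x hx
        exact ⟨hx.1, by rw [hx.2]; rfl⟩
      rcases hmax.2.2 _ (hKideal t) hsub with h | h
      · exact h
      · exfalso
        have : u ∈ {x : G | (0 ≤ x ∧ x ≤ u) ∧ s x t = 0} := by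
          rw [h]; exact ⟨hu, le_refl u⟩
        have := this.2
        rw [hptu t] at this
        norm_num at this
    -- realization of reachable pairs
    have hreal : ∀ t t' : T, ∀ p q : ℝ × ℝ, MVReach p q →
        ∀ x : G, 0 ≤ x → x ≤ u → s x t = p.1 → s x t' = p.2 →
        ∃ y : G, (0 ≤ y ∧ y ≤ u) ∧ s y t = q.1 ∧ s y t' = q.2 := by
      intro t t' p q h
      induction h with
      | refl p =>
        intro x hx0 hxu h1 h2
        exact ⟨x, ⟨hx0, hxu⟩, h1, h2⟩
      | dbl p q h ih =>
        intro x hx0 hxu h1 h2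
        refine ih ((x + x) ⊓ u) (le_inf (add_nonneg hx0 hx0) hu) inf_le_right ?_ ?_
        · have hh := hptoplus t x x hx0 hxu hx0 hxu
          rw [h1] at hh
          simpa [two_mul] using hh
        · have hh := hptoplus t' x x hx0 hxu hx0 hxu
          rw [h2] at hh
          simpa [two_mul] using hh
      | neg p q h ih =>
        intro x hx0 hxu h1 h2
        have hb0 : 0 ≤ u + -x := by
          have := add_le_add_left hxu (-x)
          rwa [add_neg_cancel] at this
        have hbu : u + -x ≤ u := by
          have := add_le_add_right (neg_nonpos.mpr hx0) u
          rwa [add_zero] at this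
        refine ih (u + -x) hb0 hbu ?_ ?_
        · rw [hptnegl t x hx0 hxu, h1]
        · rw [hptnegl t' x hx0 hxu, h2]
    -- if two evaluations of s x differ, contradiction
    have hconst : ∀ x : G, 0 ≤ x → x ≤ u → ∀ t t' : T, s x t = s x t' := by
      intro x hx0 hxu t t'
      by_contra hne
      rcases lt_or_gt_of_ne hne with hlt | hlt
      · obtain ⟨γ, hγ, hr⟩ := mvreach_sep (s x t) (s x t')
          (hptrange t x hx0 hxu).1 (hptrange t' x hx0 hxu).2 hlt
        obtain ⟨y, ⟨hy0, hyu⟩, hyt, hyt'⟩ := hreal t t' _ _ hr x hx0 hxu rfl rfl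
        have hyK : y ∈ {z : G | (0 ≤ z ∧ z ≤ u) ∧ s z t = 0} := ⟨⟨hy0, hyu⟩, hyt⟩
        rw [hKeq t, ← hKeq t'] at hyK
        rw [hyK.2] at hyt'
        linarith
      · obtain ⟨γ, hγ, hr⟩ := mvreach_sep (s x t') (s x t)
          (hptrange t' x hx0 hxu).1 (hptrange t x hx0 hxu).2 hlt
        obtain ⟨y, ⟨hy0, hyu⟩, hyt', hyt⟩ := hreal t' t _ _ hr x hx0 hxu rfl rfl
        have hyK : y ∈ {z : G | (0 ≤ z ∧ z ≤ u) ∧ s z t' = 0} := ⟨⟨hy0, hyu⟩, hyt'⟩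
        rw [hKeq t', ← hKeq t] at hyK
        rw [hyK.2] at hyt
        linarith
    refine ⟨fun x => s x t₀, hpt0 t₀, hptu t₀, hptrange t₀,
      hptoplus t₀, hptnegl t₀, hptnegr t₀, ?_⟩
    intro x hx0 hxu
    ext t
    simp only [ContinuousMap.smul_apply, ContinuousMap.one_apply, smul_eq_mul, mul_one]
    exact hconst x hx0 hxu t t₀
  · -- reverse direction
    rintro ⟨s₀, h0, h1, hr, hop, hnl, hnr, heq⟩
    have hiff : ∀ x : G, 0 ≤ x → x ≤ u → (s x = 0 ↔ s₀ x = 0) := by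
      intro x hx0 hxu
      constructor
      · intro h
        have := congrArg (fun f : C(T, ℝ) => f t₀) (heq x hx0 hxu)
        simp only [ContinuousMap.smul_apply, ContinuousMap.one_apply, smul_eq_mul,
          mul_one] at this
        rw [h] at this
        simpa using this.symm
      · intro h
        rw [heq x hx0 hxu, h, zero_smul]
    have hseteq : {x : G | (0 ≤ x ∧ x ≤ u) ∧ s x = 0} =
        {x : G | (0 ≤ x ∧ x ≤ u) ∧ s₀ x = 0} := by
      ext x
      exact and_congr_right fun hx => hiff x hx.1 hx.2
    rw [hseteq]
    refine ⟨isMVIdeal_ker u hu s₀ h0 (fun x a b => (hr x a b).1) hop, ?_, ?_⟩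
    · intro h
      have : u ∈ {x : G | (0 ≤ x ∧ x ≤ u) ∧ s₀ x = 0} := by
        rw [h]; exact ⟨hu, le_refl u⟩
      exact one_ne_zero (h1.symm.trans this.2)
    · intro J hJ hsub
      by_cases hJK : J = {x : G | (0 ≤ x ∧ x ≤ u) ∧ s₀ x = 0}
      · exact Or.inl hJK
      · right
        obtain ⟨x, hxJ, hxK⟩ : ∃ x ∈ J, x ∉ {x : G | (0 ≤ x ∧ x ≤ u) ∧ s₀ x = 0} := by
          by_contra hc
          push_neg at hc
          exact hJK (Set.Subset.antisymm hc hsub)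
        obtain ⟨hx0, hxu⟩ := hJ.1 hxJ
        have hσx : s₀ x ≠ 0 := fun h => hxK ⟨⟨hx0, hxu⟩, h⟩
        exact mvideal_eq_full u hu s₀ h0 (fun x a b => (hr x a b).1) hop hnr
          J hJ hsub x hxJ hσx

end
end

section
/- Let G be a directed abelian partially ordered group with the Riesz decomposition property, R a Dedekind complete Riesz space, and d : G⁺ → R a subadditive map (d(0) = 0, d(x+y) ≤ d(x) + d(y)) such that for each x ∈ G⁺ the set D(x) = {d(x₁)+...+d(xₙ) : x = x₁+...+xₙ, xᵢ ∈ G⁺} is bounded above in R. Then the map m(x) := sup D(x) is additive on G⁺: m(x+y) = m(x) + m(y). -/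
/-- Let `G` be a directed abelian po-group with the Riesz decomposition
property, `R` a Dedekind complete Riesz space, and `d : G⁺ → R` subadditive with
each set `D(x)` of decomposition sums bounded above.  Then `m(x) := sup D(x)` is
additive on `G⁺`. -/
theorem sup_of_subadditive_is_additive
    {G R : Type*}
    [PartialOrder G] [AddCommGroup G] [CovariantClass G G (· + ·) (· ≤ ·)]
    (hdir : ∀ a b : G, ∃ c : G, a ≤ c ∧ b ≤ c)
    (hRDP : ∀ x₁ x₂ y₁ y₂ : G, 0 ≤ x₁ → 0 ≤ x₂ → 0 ≤ y₁ → 0 ≤ y₂ →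
      x₁ + x₂ = y₁ + y₂ →
      ∃ c₁₁ c₁₂ c₂₁ c₂₂ : G, 0 ≤ c₁₁ ∧ 0 ≤ c₁₂ ∧ 0 ≤ c₂₁ ∧ 0 ≤ c₂₂ ∧
        x₁ = c₁₁ + c₁₂ ∧ x₂ = c₂₁ + c₂₂ ∧ y₁ = c₁₁ + c₂₁ ∧ y₂ = c₁₂ + c₂₂)
    [ConditionallyCompleteLattice R] [AddCommGroup R]
    [CovariantClass R R (· + ·) (· ≤ ·)]
    [Module ℝ R] [PosSMulMono ℝ R]
    (d : G → R) (hd0 : d 0 = 0)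
    (hsub : ∀ x y : G, 0 ≤ x → 0 ≤ y → d (x + y) ≤ d x + d y)
    (D : G → Set R)
    (hD : ∀ x : G, D x = {r : R | ∃ l : List G, l ≠ [] ∧ (∀ a ∈ l, 0 ≤ a) ∧
      l.sum = x ∧ (l.map d).sum = r})
    (hbdd : ∀ x : G, 0 ≤ x → BddAbove (D x)) :
    ∀ x y : G, 0 ≤ x → 0 ≤ y → sSup (D (x + y)) = sSup (D x) + sSup (D y) := by
  -- membership helper
  have hmem : ∀ x : G, 0 ≤ x → ∀ l : List G, l ≠ [] → (∀ a ∈ l, 0 ≤ a) →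
      l.sum = x → (l.map d).sum ∈ D x := by
    intro x _ l hne hpos hsum
    rw [hD x]
    exact ⟨l, hne, hpos, hsum, rfl⟩
  have hne : ∀ x : G, 0 ≤ x → (D x).Nonempty := by
    intro x hx
    exact ⟨d x, by simpa using hmem x hx [x] (by simp) (by simpa) (by simp)⟩
  -- the key splitting lemma, by induction on the list
  have key : ∀ l : List G, (∀ a ∈ l, 0 ≤ a) → ∀ x y : G, 0 ≤ x → 0 ≤ y →
      x + y = l.sum →
      ∃ la lb : List G, la.length = l.length ∧ lb.length = l.length ∧
        (∀ a ∈ la, 0 ≤ a) ∧ (∀ b ∈ lb, 0 ≤ b) ∧ la.sum = x ∧ lb.sum = y ∧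
        (l.map d).sum ≤ (la.map d).sum + (lb.map d).sum := by
    intro l
    induction l with
    | nil =>
      intro _ x y hx hy hxy
      simp only [List.sum_nil] at hxy
      have hx0 : x = 0 := le_antisymm (by
        calc x ≤ x + y := le_add_of_nonneg_right hy
        _ = 0 := hxy) hx
      have hy0 : y = 0 := by
        have := hxy
        rw [hx0, zero_add] at this
        exact this
      exact ⟨[], [], rfl, rfl, by simp, by simp, by simp [hx0], by simp [hy0], by simp⟩
    | cons z l ih =>
      intro hpos x y hx hy hxy
      have hz : 0 ≤ z := hpos z (by simp)
      have hl : ∀ a ∈ l, 0 ≤ a := fun a ha => hpos a (by simp [ha])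
      have hlsum : 0 ≤ l.sum := List.sum_nonneg hl
      rw [List.sum_cons] at hxy
      obtain ⟨c₁₁, c₁₂, c₂₁, c₂₂, h11, h12, h21, h22, hx', hy', hz', hls⟩ :=
        hRDP x y z l.sum hx hy hz hlsum hxy
      obtain ⟨la, lb, hlena, hlenb, hpa, hpb, hsa, hsb, hle⟩ :=
        ih hl c₁₂ c₂₂ h12 h22 hls.symm
      refine ⟨c₁₁ :: la, c₂₁ :: lb, by simp [hlena], by simp [hlenb], ?_, ?_, ?_, ?_, ?_⟩
      · intro a ha
        rcases List.mem_cons.1 ha with rfl | ha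
        · exact h11
        · exact hpa a ha
      · intro b hb
        rcases List.mem_cons.1 hb with rfl | hb
        · exact h21
        · exact hpb b hb
      · simp [hsa, hx'.symm]
      · simp [hsb, hy'.symm]
      · simp only [List.map_cons, List.sum_cons]
        have h1 : d z ≤ d c₁₁ + d c₂₁ := by
          rw [hz']; exact hsub c₁₁ c₂₁ h11 h21
        calc d z + (l.map d).sum ≤ (d c₁₁ + d c₂₁) + ((la.map d).sum + (lb.map d).sum) :=
              add_le_add h1 hle
          _ = d c₁₁ + (la.map d).sum + (d c₂₁ + (lb.map d).sum) := by abel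
  intro x y hx hy
  have hxy : 0 ≤ x + y := add_nonneg hx hy
  apply le_antisymm
  · -- sSup D(x+y) ≤ sSup D x + sSup D y
    apply csSup_le (hne _ hxy)
    intro r hr
    rw [hD (x + y)] at hr
    obtain ⟨l, hlne, hlpos, hlsum, hlr⟩ := hr
    obtain ⟨la, lb, hlena, hlenb, hpa, hpb, hsa, hsb, hle⟩ :=
      key l hlpos x y hx hy hlsum.symm
    have hane : la ≠ [] := by
      intro h; rw [h] at hlena; exact hlne (List.eq_nil_of_length_eq_zero hlena.symm)
    have hbne : lb ≠ [] := by
      intro h; rw [h] at hlenb; exact hlne (List.eq_nil_of_length_eq_zero hlenb.symm)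
    have ha : (la.map d).sum ∈ D x := hmem x hx la hane hpa hsa
    have hb : (lb.map d).sum ∈ D y := hmem y hy lb hbne hpb hsb
    calc r = (l.map d).sum := hlr.symm
      _ ≤ (la.map d).sum + (lb.map d).sum := hle
      _ ≤ sSup (D x) + sSup (D y) :=
        add_le_add (le_csSup (hbdd x hx) ha) (le_csSup (hbdd y hy) hb)
  · -- sSup D x + sSup D y ≤ sSup D(x+y)
    have step : ∀ r ∈ D x, ∀ s ∈ D y, r + s ≤ sSup (D (x + y)) := by
      intro r hr s hs
      rw [hD x] at hr; rw [hD y] at hs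
      obtain ⟨la, hane, hpa, hsa, hra⟩ := hr
      obtain ⟨lb, hbne, hpb, hsb, hrb⟩ := hs
      have hmem' : r + s ∈ D (x + y) := by
        have := hmem (x + y) hxy (la ++ lb) (by simp [hane]) (by
          intro a ha
          rcases List.mem_append.1 ha with h | h
          · exact hpa a h
          · exact hpb a h) (by simp [hsa, hsb])
        simpa [hra, hrb] using this
      exact le_csSup (hbdd _ hxy) hmem'
    have h1 : ∀ s ∈ D y, sSup (D x) ≤ sSup (D (x + y)) - s := by
      intro s hs
      apply csSup_le (hne x hx)
      intro r hr
      exact le_sub_iff_add_le.mpr (step r hr s hs)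
    have h2 : sSup (D y) ≤ sSup (D (x + y)) - sSup (D x) := by
      apply csSup_le (hne y hy)
      intro s hs
      exact le_sub_comm.mp (h1 s hs)
    calc sSup (D x) + sSup (D y) ≤ sSup (D x) + (sSup (D (x + y)) - sSup (D x)) :=
          add_le_add le_rfl h2
      _ = sSup (D (x + y)) := by abel
end

section
/- Let M = Γ(G, u) for a unital ℓ-group (G, u), and let R be a Dedekind complete Riesz space. Then the space J(M, R) of R-Jordan signed measures on M, ordered by m₁ ≤⁺ m₂ iff m₂ - m₁ is an R-measure, is a Dedekind complete Riesz space. Moreover, for a nonempty family {mᵢ} bounded above, its supremum is given by (⋁ᵢ mᵢ)(x) = sup { d(x₁)+...+d(xₙ) : x = x₁+...+xₙ } where d(y) = supᵢ mᵢ(y). -/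
set_option linter.unusedSectionVars false

section GAux

variable {G : Type*} [Lattice G] [AddGroup G]
  [CovariantClass G G (· + ·) (· ≤ ·)]
  [CovariantClass G G (Function.swap (· + ·)) (· ≤ ·)]

private lemma jsm_sup_add_sup (w : G) :
    ((0:G) ⊔ w) + ((0:G) ⊔ -w) = ((0:G) ⊔ -w) + ((0:G) ⊔ w) := by
  have h : ∀ v : G, ((0:G) ⊔ v) + ((0:G) ⊔ -v) = ((0:G) ⊔ v) ⊔ ((0:G) ⊔ -v) := by
    intro v
    rw [add_sup, add_zero, sup_add, zero_add, add_neg_cancel, sup_comm (-v) 0]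
  have h2 := h (-w)
  rw [neg_neg] at h2
  rw [h w, h2, sup_comm]

private lemma jsm_list_sum_nonneg : ∀ (l : List G), (∀ a ∈ l, 0 ≤ a) → 0 ≤ l.sum
  | [], _ => by simp
  | a :: t, h => by
    rw [List.sum_cons]
    exact add_nonneg (h a (by simp))
      (jsm_list_sum_nonneg t (fun b hb => h b (by simp [hb])))

private lemma jsm_mem_le_sum : ∀ (l : List G), (∀ a ∈ l, 0 ≤ a) → ∀ a ∈ l, a ≤ l.sum
  | [], _, a, ha => by simp at ha
  | b :: t, h, a, ha => by
    rw [List.sum_cons]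
    rcases List.mem_cons.mp ha with rfl | hat
    · exact le_add_of_nonneg_right
        (jsm_list_sum_nonneg t (fun c hc => h c (by simp [hc])))
    · exact le_trans (jsm_mem_le_sum t (fun c hc => h c (by simp [hc])) a hat)
        (le_add_of_nonneg_left (h b (by simp)))

private lemma jsm_list_riesz : ∀ (l : List G), (∀ a ∈ l, 0 ≤ a) → ∀ x y : G, 0 ≤ x → 0 ≤ y →
    l.sum = x + y →
    ∃ lp : List (G × G), (∀ p ∈ lp, 0 ≤ p.1 ∧ 0 ≤ p.2) ∧
      lp.map (fun p => p.1 + p.2) = l ∧ (lp.map Prod.fst).sum = x ∧ (lp.map Prod.snd).sum = y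
  | [], _, x, y, hx, hy, hsum => by
    rw [List.sum_nil] at hsum
    have hxy : x ≤ 0 := by
      have h1 : x + 0 ≤ x + y := add_le_add le_rfl hy
      rw [add_zero, ← hsum] at h1
      exact h1
    have hx0 : x = 0 := le_antisymm hxy hx
    have hy0 : y = 0 := by
      rw [hx0, zero_add] at hsum
      exact hsum.symm
    exact ⟨[], by simp, by simp, by simp [hx0], by simp [hy0]⟩
  | a :: t, hpos, x, y, hx, hy, hsum => by
    rw [List.sum_cons] at hsum
    have ha : 0 ≤ a := hpos a (by simp)
    have hts : 0 ≤ t.sum := jsm_list_sum_nonneg t (fun b hb => hpos b (by simp [hb]))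
    have hax : a ≤ x + y := by
      calc a = a + 0 := (add_zero a).symm
        _ ≤ a + t.sum := add_le_add le_rfl hts
        _ = x + y := hsum
    have hbc : (a ⊓ x) + (-(a ⊓ x) + a) = a := add_neg_cancel_left _ a
    have hb0 : 0 ≤ a ⊓ x := le_inf ha hx
    have hbx : a ⊓ x ≤ x := inf_le_right
    have hc0 : 0 ≤ -(a ⊓ x) + a := by
      rw [le_neg_add_iff_add_le, add_zero]; exact inf_le_left
    have hcw : -(a ⊓ x) + a = (0:G) ⊔ (-x + a) := by
      rw [neg_inf, sup_add, neg_add_cancel]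
    have hx'w : -(a ⊓ x) + x = (0:G) ⊔ -(-x + a) := by
      rw [neg_inf, sup_add, neg_add_cancel, neg_add_rev, neg_neg, sup_comm]
    have hx'0 : 0 ≤ -(a ⊓ x) + x := by
      rw [le_neg_add_iff_add_le, add_zero]; exact hbx
    have hcy : -(a ⊓ x) + a ≤ y := by
      rw [hcw]
      exact sup_le hy (by rw [neg_add_le_iff_le_add]; exact hax)
    have hy'0 : 0 ≤ -(-(a ⊓ x) + a) + y := by
      rw [le_neg_add_iff_add_le, add_zero]; exact hcy
    have hAC : AddCommute (-(a ⊓ x) + a) (-(a ⊓ x) + x) := by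
      show _ + _ = _ + _
      rw [hcw, hx'w]
      exact jsm_sup_add_sup _
    have htsum : t.sum = (-(a ⊓ x) + x) + (-(-(a ⊓ x) + a) + y) := by
      have h2 : t.sum = -a + (x + y) := by rw [← hsum, neg_add_cancel_left]
      rw [h2]
      nth_rewrite 1 [← hbc]
      rw [neg_add_rev]
      calc -(-(a ⊓ x) + a) + -(a ⊓ x) + (x + y)
          = -(-(a ⊓ x) + a) + (-(a ⊓ x) + x) + y := by simp only [add_assoc]
        _ = (-(a ⊓ x) + x) + -(-(a ⊓ x) + a) + y := by rw [hAC.neg_left.eq]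
        _ = (-(a ⊓ x) + x) + (-(-(a ⊓ x) + a) + y) := by rw [add_assoc]
    obtain ⟨lp, hlp1, hlp2, hlp3, hlp4⟩ :=
      jsm_list_riesz t (fun b hb => hpos b (by simp [hb])) _ _ hx'0 hy'0 htsum
    refine ⟨(a ⊓ x, -(a ⊓ x) + a) :: lp, ?_, ?_, ?_, ?_⟩
    · intro p hp
      rcases List.mem_cons.mp hp with rfl | hpl
      · exact ⟨hb0, hc0⟩
      · exact hlp1 p hpl
    · rw [List.map_cons, hlp2, hbc]
    · rw [List.map_cons, List.sum_cons, hlp3, add_neg_cancel_left]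
    · rw [List.map_cons, List.sum_cons, hlp4, add_neg_cancel_left]

end GAux

private lemma jsm_sum_map_neg {A R : Type*} [AddCommGroup R] (f : A → R) : ∀ l : List A,
    (l.map (fun a => -(f a))).sum = -((l.map f).sum)
  | [] => by simp
  | a :: t => by
    rw [List.map_cons, List.map_cons, List.sum_cons, List.sum_cons,
      jsm_sum_map_neg f t, neg_add]

private lemma jsm_sInf_neg {R : Type*} [ConditionallyCompleteLattice R] [AddCommGroup R]
    [CovariantClass R R (· + ·) (· ≤ ·)] (s : Set R) (hne : s.Nonempty) (hbdd : BddAbove s) :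
    sInf {r : R | -r ∈ s} = -(sSup s) := by
  have hglb : IsGLB {r : R | -r ∈ s} (-(sSup s)) := by
    constructor
    · intro r hr
      exact neg_le.mpr (le_csSup hbdd hr)
    · intro c hc
      refine le_neg.mpr (csSup_le hne fun v hv => ?_)
      exact le_neg.mp (hc (show -(-v) ∈ s by rwa [neg_neg]))
  obtain ⟨v, hv⟩ := hne
  exact hglb.csInf_eq ⟨-v, show -(-v) ∈ s by rwa [neg_neg]⟩

def jsmSet {G R : Type*} {ι : Type} [Lattice G] [AddGroup G] [ConditionallyCompleteLattice R]
    [AddCommGroup R] (mi : ι → G → R) (x : G) : Set R :=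
  {r : R | ∃ l : List G, l ≠ [] ∧ (∀ a ∈ l, 0 ≤ a) ∧ l.sum = x ∧
    (l.map (fun y => sSup (Set.range (fun i => mi i y)))).sum = r}

private lemma jsm_map_sum {G R : Type*} [Lattice G] [AddGroup G]
    [CovariantClass G G (· + ·) (· ≤ ·)]
    [CovariantClass G G (Function.swap (· + ·)) (· ≤ ·)]
    [AddCommGroup R]
    (u : G) (m : G → R) (h0 : m 0 = 0)
    (hadd : ∀ (x y : G), 0 ≤ x → 0 ≤ y → x + y ≤ u → m (x+y) = m x + m y) :
    ∀ l : List G, (∀ a ∈ l, 0 ≤ a) → l.sum ≤ u → (l.map m).sum = m l.sum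
  | [], _, _ => by simp [h0]
  | a :: t, hpos, hle => by
    rw [List.map_cons, List.sum_cons, List.sum_cons]
    have ha := hpos a (by simp)
    have hts := jsm_list_sum_nonneg t (fun b hb => hpos b (by simp [hb]))
    have hle' : a + t.sum ≤ u := by rwa [List.sum_cons] at hle
    rw [jsm_map_sum u m h0 hadd t (fun b hb => hpos b (by simp [hb]))
        (le_trans (le_add_of_nonneg_left ha) hle'), hadd a t.sum ha hts hle']

private lemma jsm_sup_core {G R : Type*} [Lattice G] [AddGroup G]
    [CovariantClass G G (· + ·) (· ≤ ·)]
    [CovariantClass G G (Function.swap (· + ·)) (· ≤ ·)]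
    [ConditionallyCompleteLattice R] [AddCommGroup R]
    [CovariantClass R R (· + ·) (· ≤ ·)]
    (u : G) (hu : 0 ≤ u) {ι : Type} [Nonempty ι] (mi : ι → G → R) (m₀ : G → R)
    (hadd : ∀ i (x y : G), 0 ≤ x → 0 ≤ y → x + y ≤ u → mi i (x+y) = mi i x + mi i y)
    (hm₀add : ∀ (x y : G), 0 ≤ x → 0 ≤ y → x + y ≤ u → m₀ (x+y) = m₀ x + m₀ y)
    (hb : ∀ i (x : G), 0 ≤ x → x ≤ u → mi i x ≤ m₀ x) :
    (∀ x : G, 0 ≤ x → x ≤ u → (jsmSet mi x).Nonempty ∧ BddAbove (jsmSet mi x)) ∧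
    (∀ i (x : G), 0 ≤ x → x ≤ u → mi i x ≤ sSup (jsmSet mi x)) ∧
    (∀ (x y : G), 0 ≤ x → 0 ≤ y → x + y ≤ u →
        sSup (jsmSet mi (x+y)) = sSup (jsmSet mi x) + sSup (jsmSet mi y)) ∧
    (∀ (h : G → R), (∀ (x y : G), 0 ≤ x → 0 ≤ y → x + y ≤ u → h (x+y) = h x + h y) →
        (∀ i (x : G), 0 ≤ x → x ≤ u → mi i x ≤ h x) →
        ∀ (x : G), 0 ≤ x → x ≤ u → sSup (jsmSet mi x) ≤ h x) := by
  classical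
  set d : G → R := fun y => sSup (Set.range fun i => mi i y) with hd
  have hrange_bdd : ∀ x : G, 0 ≤ x → x ≤ u → BddAbove (Set.range fun i => mi i x) :=
    fun x hx hxu => ⟨m₀ x, by rintro r ⟨i, rfl⟩; exact hb i x hx hxu⟩
  have hd_lb : ∀ i (x : G), 0 ≤ x → x ≤ u → mi i x ≤ d x :=
    fun i x hx hxu => le_csSup (hrange_bdd x hx hxu) ⟨i, rfl⟩
  have hd_ub : ∀ (h : G → R), (∀ i (x : G), 0 ≤ x → x ≤ u → mi i x ≤ h x) →
      ∀ x : G, 0 ≤ x → x ≤ u → d x ≤ h x := by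
    intro h hh x hx hxu
    rw [hd]
    exact csSup_le (Set.range_nonempty _) (by rintro r ⟨i, rfl⟩; exact hh i x hx hxu)
  have hmem : ∀ (x : G) (l : List G), l ≠ [] → (∀ a ∈ l, 0 ≤ a) → l.sum = x →
      (l.map d).sum ∈ jsmSet mi x := fun x l h1 h2 h3 => ⟨l, h1, h2, h3, by rw [hd]⟩
  have hne : ∀ x : G, 0 ≤ x → (jsmSet mi x).Nonempty :=
    fun x hx => ⟨_, hmem x [x] (by simp) (by simpa using hx) (by simp)⟩
  have hub_gen : ∀ (h : G → R), (∀ (x y : G), 0 ≤ x → 0 ≤ y → x + y ≤ u → h (x+y) = h x + h y) →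
      (∀ i (x : G), 0 ≤ x → x ≤ u → mi i x ≤ h x) →
      ∀ (x : G), 0 ≤ x → x ≤ u → ∀ r ∈ jsmSet mi x, r ≤ h x := by
    intro h haddh hbh x hx hxu r hr
    obtain ⟨l, hl1, hl2, hl3, hl4⟩ := hr
    rw [← hd] at hl4
    have hmem_u : ∀ a ∈ l, 0 ≤ a ∧ a ≤ u := fun a hal =>
      ⟨hl2 a hal, le_trans (jsm_mem_le_sum l hl2 a hal) (by rw [hl3]; exact hxu)⟩
    have h0 : h 0 = 0 := by
      have h00 := haddh 0 0 le_rfl le_rfl (by simpa using hu)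
      rw [add_zero] at h00
      exact left_eq_add.mp h00
    rw [← hl4]
    calc (l.map d).sum ≤ (l.map h).sum :=
          List.sum_le_sum (fun a hal => hd_ub h hbh a (hmem_u a hal).1 (hmem_u a hal).2)
      _ = h l.sum := jsm_map_sum u h h0 haddh l hl2 (by rw [hl3]; exact hxu)
      _ = h x := by rw [hl3]
  have hbdd : ∀ x : G, 0 ≤ x → x ≤ u → BddAbove (jsmSet mi x) :=
    fun x hx hxu => ⟨m₀ x, fun r hr => hub_gen m₀ hm₀add hb x hx hxu r hr⟩
  have hDlb : ∀ i (x : G), 0 ≤ x → x ≤ u → mi i x ≤ sSup (jsmSet mi x) := by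
    intro i x hx hxu
    refine le_trans (hd_lb i x hx hxu) (le_csSup (hbdd x hx hxu) ?_)
    simpa using hmem x [x] (by simp) (by simpa using hx) (by simp)
  have hDadd : ∀ (x y : G), 0 ≤ x → 0 ≤ y → x + y ≤ u →
      sSup (jsmSet mi (x+y)) = sSup (jsmSet mi x) + sSup (jsmSet mi y) := by
    intro x y hx hy hxy
    have hxu : x ≤ u := le_trans (le_add_of_nonneg_right hy) hxy
    have hyu : y ≤ u := le_trans (le_add_of_nonneg_left hx) hxy
    have hxy0 : 0 ≤ x + y := add_nonneg hx hy
    apply le_antisymm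
    · refine csSup_le (hne _ hxy0) ?_
      rintro r ⟨l, hl1, hl2, hl3, hl4⟩
      rw [← hd] at hl4
      obtain ⟨lp, hp1, hp2, hp3, hp4⟩ := jsm_list_riesz l hl2 x y hx hy hl3
      have hlp_ne : lp ≠ [] := by
        intro hnil; rw [hnil] at hp2; exact hl1 hp2.symm
      have hmem_u : ∀ p ∈ lp, p.1 + p.2 ≤ u := by
        intro p hp
        have hmm : p.1 + p.2 ∈ l := by
          rw [← hp2]; exact List.mem_map_of_mem hp
        exact le_trans (jsm_mem_le_sum l hl2 _ hmm) (by rw [hl3]; exact hxy)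
      have step1 : (l.map d).sum = (lp.map (fun p => d (p.1 + p.2))).sum := by
        rw [← hp2, List.map_map]; rfl
      have step2 : (lp.map (fun p => d (p.1 + p.2))).sum ≤
          (lp.map (fun p => d p.1 + d p.2)).sum := by
        refine List.sum_le_sum ?_
        intro p hp
        have h1 : p.1 ≤ u := le_trans (le_add_of_nonneg_right (hp1 p hp).2) (hmem_u p hp)
        have h2 : p.2 ≤ u := le_trans (le_add_of_nonneg_left (hp1 p hp).1) (hmem_u p hp)
        rw [hd]
        refine csSup_le (Set.range_nonempty _) ?_
        rintro r' ⟨i, rfl⟩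
        simp only
        rw [hadd i p.1 p.2 (hp1 p hp).1 (hp1 p hp).2 (hmem_u p hp)]
        exact add_le_add (hd_lb i p.1 (hp1 p hp).1 h1) (hd_lb i p.2 (hp1 p hp).2 h2)
      have step3 : (lp.map (fun p => d p.1 + d p.2)).sum =
          ((lp.map Prod.fst).map d).sum + ((lp.map Prod.snd).map d).sum := by
        rw [List.map_map, List.map_map, List.sum_map_add]; rfl
      have hfst : ((lp.map Prod.fst).map d).sum ≤ sSup (jsmSet mi x) := by
        refine le_csSup (hbdd x hx hxu) (hmem x _ ?_ ?_ hp3)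
        · intro hmm; exact hlp_ne (List.map_eq_nil_iff.mp hmm)
        · intro a ha
          obtain ⟨p, hp, rfl⟩ := List.mem_map.mp ha
          exact (hp1 p hp).1
      have hsnd : ((lp.map Prod.snd).map d).sum ≤ sSup (jsmSet mi y) := by
        refine le_csSup (hbdd y hy hyu) (hmem y _ ?_ ?_ hp4)
        · intro hmm; exact hlp_ne (List.map_eq_nil_iff.mp hmm)
        · intro a ha
          obtain ⟨p, hp, rfl⟩ := List.mem_map.mp ha
          exact (hp1 p hp).2
      rw [← hl4, step1]
      exact le_trans step2 (by rw [step3]; exact add_le_add hfst hsnd)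
    · have key : ∀ r₁ ∈ jsmSet mi x, ∀ r₂ ∈ jsmSet mi y,
          r₁ + r₂ ≤ sSup (jsmSet mi (x+y)) := by
        rintro r₁ ⟨l₁, h₁1, h₁2, h₁3, h₁4⟩ r₂ ⟨l₂, h₂1, h₂2, h₂3, h₂4⟩
        rw [← hd] at h₁4 h₂4
        refine le_csSup (hbdd _ hxy0 hxy) ⟨l₁ ++ l₂, by simp [h₁1], ?_, ?_, ?_⟩
        · intro a ha
          rcases List.mem_append.mp ha with h | h
          exacts [h₁2 a h, h₂2 a h]
        · rw [List.sum_append, h₁3, h₂3]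
        · rw [← hd, List.map_append, List.sum_append, h₁4, h₂4]
      rw [← le_sub_iff_add_le]
      refine csSup_le (hne x hx) fun r₁ hr₁ => ?_
      rw [le_sub_iff_add_le, add_comm r₁, ← le_sub_iff_add_le]
      refine csSup_le (hne y hy) fun r₂ hr₂ => ?_
      rw [le_sub_iff_add_le, add_comm r₂]
      exact key r₁ hr₁ r₂ hr₂
  exact ⟨fun x hx hxu => ⟨hne x hx, hbdd x hx hxu⟩, hDlb, hDadd,
    fun h hh hbh x hx hxu => csSup_le (hne x hx) (fun r hr => hub_gen h hh hbh x hx hxu r hr)⟩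

/-- For `M = Γ(G,u)` and a Dedekind complete Riesz space `R`, the space
`J(M,R)` of `R`-Jordan signed measures, ordered by `m₁ ≤⁺ m₂` iff `m₂ - m₁` is an
`R`-measure, is a Dedekind complete Riesz space; the supremum of a nonempty bounded
family is given by `(⋁ᵢ mᵢ)(x) = sup { d(x₁)+⋯+d(xₙ) : x = x₁+⋯+xₙ }` with
`d(y) = supᵢ mᵢ(y)`. -/
theorem jordan_signed_measures_dedekind_complete_riesz
    {G R : Type*}
    [Lattice G] [AddGroup G]
    [CovariantClass G G (· + ·) (· ≤ ·)]
    [CovariantClass G G (Function.swap (· + ·)) (· ≤ ·)]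
    [ConditionallyCompleteLattice R] [AddCommGroup R]
    [CovariantClass R R (· + ·) (· ≤ ·)]
    [Module ℝ R] [PosSMulMono ℝ R]
    (u : G) (hu : 0 ≤ u) (hustrong : ∀ g : G, ∃ n : ℕ, 1 ≤ n ∧ g ≤ n • u)
    (IsMeas IsJordan : (G → R) → Prop)
    (le' : (G → R) → (G → R) → Prop)
    (hIsMeas : ∀ m : G → R, IsMeas m ↔
      ((∀ x : G, 0 ≤ x → x ≤ u → 0 ≤ m x) ∧
       (∀ x y : G, 0 ≤ x → 0 ≤ y → x + y ≤ u → m (x + y) = m x + m y)))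
    (hIsJordan : ∀ m : G → R, IsJordan m ↔
      ∃ p q : G → R, IsMeas p ∧ IsMeas q ∧ ∀ x : G, m x = p x - q x)
    (hle : ∀ m₁ m₂ : G → R, le' m₁ m₂ ↔ IsMeas (fun x => m₂ x - m₁ x)) :
    -- every nonempty bounded-above family has a least upper bound, given by the formula
    (∀ (ι : Type) [Nonempty ι] (mi : ι → (G → R)), (∀ i, IsJordan (mi i)) →
      (∃ m₀ : G → R, IsJordan m₀ ∧ ∀ i, le' (mi i) m₀) →
      ∃ msup : G → R, IsJordan msup ∧ (∀ i, le' (mi i) msup) ∧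
        (∀ h : G → R, IsJordan h → (∀ i, le' (mi i) h) → le' msup h) ∧
        (∀ x : G, 0 ≤ x → x ≤ u →
          msup x = sSup {r : R | ∃ l : List G, l ≠ [] ∧ (∀ a ∈ l, 0 ≤ a) ∧
            l.sum = x ∧
            (l.map (fun y => sSup (Set.range (fun i => mi i y)))).sum = r})) ∧
    -- every nonempty bounded-below family has a greatest lower bound, given dually
    (∀ (ι : Type) [Nonempty ι] (mi : ι → (G → R)), (∀ i, IsJordan (mi i)) →
      (∃ m₀ : G → R, IsJordan m₀ ∧ ∀ i, le' m₀ (mi i)) →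
      ∃ minf : G → R, IsJordan minf ∧ (∀ i, le' minf (mi i)) ∧
        (∀ h : G → R, IsJordan h → (∀ i, le' h (mi i)) → le' h minf) ∧
        (∀ x : G, 0 ≤ x → x ≤ u →
          minf x = sInf {r : R | ∃ l : List G, l ≠ [] ∧ (∀ a ∈ l, 0 ≤ a) ∧
            l.sum = x ∧
            (l.map (fun y => sInf (Set.range (fun i => mi i y)))).sum = r})) ∧
    -- J(M,R) is a real vector space: closed under scalar multiplication
    (∀ (c : ℝ) (m : G → R), IsJordan m → IsJordan (fun x => c • m x)) := by
  classical
  have jadd : ∀ m : G → R, IsJordan m → ∀ x y : G, 0 ≤ x → 0 ≤ y → x + y ≤ u →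
      m (x + y) = m x + m y := by
    intro m hm x y hx hy hxy
    obtain ⟨p, q, hp, hq, hpq⟩ := (hIsJordan m).mp hm
    rw [hpq, hpq, hpq, ((hIsMeas p).mp hp).2 x y hx hy hxy,
      ((hIsMeas q).mp hq).2 x y hx hy hxy]
    abel
  have jle : ∀ m₁ m₂ : G → R, IsJordan m₁ → IsJordan m₂ →
      (le' m₁ m₂ ↔ ∀ x : G, 0 ≤ x → x ≤ u → m₁ x ≤ m₂ x) := by
    intro m₁ m₂ h1 h2
    rw [hle, hIsMeas]
    constructor
    · intro h x hx hxu
      exact sub_nonneg.mp (h.1 x hx hxu)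
    · intro h
      refine ⟨fun x hx hxu => sub_nonneg.mpr (h x hx hxu), fun x y hx hy hxy => ?_⟩
      rw [jadd m₂ h2 x y hx hy hxy, jadd m₁ h1 x y hx hy hxy]
      abel
  refine ⟨?_, ?_, ?_⟩
  · -- SUPREMUM PART
    rintro ι inst mi hJ ⟨m₀, hm₀J, hm₀le⟩
    set i₀ := Classical.arbitrary ι with hi₀
    obtain ⟨p₀, q₀, hp₀, hq₀, h₀⟩ := (hIsJordan (mi i₀)).mp (hJ i₀)
    have hadd : ∀ i (x y : G), 0 ≤ x → 0 ≤ y → x + y ≤ u →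
        mi i (x+y) = mi i x + mi i y := fun i => jadd (mi i) (hJ i)
    have hm₀add := jadd m₀ hm₀J
    have hb : ∀ i (x : G), 0 ≤ x → x ≤ u → mi i x ≤ m₀ x :=
      fun i => (jle (mi i) m₀ (hJ i) hm₀J).mp (hm₀le i)
    obtain ⟨hcore1, hcore2, hcore3, hcore4⟩ := jsm_sup_core u hu mi m₀ hadd hm₀add hb
    set D : G → R := fun x => sSup (jsmSet mi x) with hD
    set A : G → R := fun x => if 0 ≤ x ∧ x ≤ u then D x - mi i₀ x else 0 with hA
    set msup : G → R := fun x => A x + mi i₀ x with hmsupd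
    have hmsup_int : ∀ x : G, 0 ≤ x → x ≤ u → msup x = D x := by
      intro x hx hxu
      show (if 0 ≤ x ∧ x ≤ u then D x - mi i₀ x else 0) + mi i₀ x = D x
      rw [if_pos ⟨hx, hxu⟩, sub_add_cancel]
    have hApos : ∀ x : G, 0 ≤ x → x ≤ u → 0 ≤ A x := by
      intro x hx hxu
      show 0 ≤ if 0 ≤ x ∧ x ≤ u then D x - mi i₀ x else 0
      rw [if_pos ⟨hx, hxu⟩]
      exact sub_nonneg.mpr (hcore2 i₀ x hx hxu)
    have hAadd : ∀ x y : G, 0 ≤ x → 0 ≤ y → x + y ≤ u → A (x+y) = A x + A y := by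
      intro x y hx hy hxy
      have hxu : x ≤ u := le_trans (le_add_of_nonneg_right hy) hxy
      have hyu : y ≤ u := le_trans (le_add_of_nonneg_left hx) hxy
      show (if 0 ≤ x + y ∧ x + y ≤ u then D (x+y) - mi i₀ (x+y) else 0) =
        (if 0 ≤ x ∧ x ≤ u then D x - mi i₀ x else 0) +
        (if 0 ≤ y ∧ y ≤ u then D y - mi i₀ y else 0)
      rw [if_pos ⟨add_nonneg hx hy, hxy⟩, if_pos ⟨hx, hxu⟩, if_pos ⟨hy, hyu⟩,
        show D (x+y) = D x + D y from hcore3 x y hx hy hxy,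
        hadd i₀ x y hx hy hxy]
      abel
    have hpmeas : IsMeas (fun x => A x + p₀ x) := by
      rw [hIsMeas]
      obtain ⟨hp₀pos, hp₀add⟩ := (hIsMeas p₀).mp hp₀
      exact ⟨fun x hx hxu => add_nonneg (hApos x hx hxu) (hp₀pos x hx hxu),
        fun x y hx hy hxy => by
          rw [hAadd x y hx hy hxy, hp₀add x y hx hy hxy]; abel⟩
    have hmsupJ : IsJordan msup := by
      rw [hIsJordan]
      refine ⟨fun x => A x + p₀ x, q₀, hpmeas, hq₀, fun x => ?_⟩
      show A x + mi i₀ x = A x + p₀ x - q₀ x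
      rw [h₀ x]; abel
    have hlesup : ∀ i, le' (mi i) msup := by
      intro i
      rw [jle (mi i) msup (hJ i) hmsupJ]
      intro x hx hxu
      rw [hmsup_int x hx hxu]
      exact hcore2 i x hx hxu
    refine ⟨msup, hmsupJ, hlesup, ?_, ?_⟩
    · intro h hhJ hub
      rw [jle msup h hmsupJ hhJ]
      intro x hx hxu
      rw [hmsup_int x hx hxu]
      exact hcore4 h (jadd h hhJ) (fun i => (jle (mi i) h (hJ i) hhJ).mp (hub i)) x hx hxu
    · intro x hx hxu
      rw [hmsup_int x hx hxu]
      rfl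
  · -- INFIMUM PART
    rintro ι inst mi hJ ⟨m₀, hm₀J, hm₀le⟩
    set i₀ := Classical.arbitrary ι with hi₀
    obtain ⟨p₀, q₀, hp₀, hq₀, h₀⟩ := (hIsJordan (mi i₀)).mp (hJ i₀)
    set mi' : ι → G → R := fun i x => -(mi i x) with hmi'
    set m₀' : G → R := fun x => -(m₀ x) with hm₀'
    have hadd : ∀ i (x y : G), 0 ≤ x → 0 ≤ y → x + y ≤ u →
        mi' i (x+y) = mi' i x + mi' i y := by
      intro i x y hx hy hxy
      show -(mi i (x+y)) = -(mi i x) + -(mi i y)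
      rw [jadd (mi i) (hJ i) x y hx hy hxy, neg_add]
    have hm₀'add : ∀ (x y : G), 0 ≤ x → 0 ≤ y → x + y ≤ u →
        m₀' (x+y) = m₀' x + m₀' y := by
      intro x y hx hy hxy
      show -(m₀ (x+y)) = -(m₀ x) + -(m₀ y)
      rw [jadd m₀ hm₀J x y hx hy hxy, neg_add]
    have hb : ∀ i (x : G), 0 ≤ x → x ≤ u → mi' i x ≤ m₀' x := by
      intro i x hx hxu
      show -(mi i x) ≤ -(m₀ x)
      exact neg_le_neg_iff.mpr ((jle m₀ (mi i) hm₀J (hJ i)).mp (hm₀le i) x hx hxu)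
    obtain ⟨hcore1, hcore2, hcore3, hcore4⟩ := jsm_sup_core u hu mi' m₀' hadd hm₀'add hb
    set D' : G → R := fun x => sSup (jsmSet mi' x) with hD'
    set B : G → R := fun x => if 0 ≤ x ∧ x ≤ u then mi i₀ x + D' x else 0 with hB
    set minf : G → R := fun x => mi i₀ x - B x with hminfd
    have hminf_int : ∀ x : G, 0 ≤ x → x ≤ u → minf x = -(D' x) := by
      intro x hx hxu
      show mi i₀ x - (if 0 ≤ x ∧ x ≤ u then mi i₀ x + D' x else 0) = -(D' x)
      rw [if_pos ⟨hx, hxu⟩]; abel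
    have hBpos : ∀ x : G, 0 ≤ x → x ≤ u → 0 ≤ B x := by
      intro x hx hxu
      show 0 ≤ if 0 ≤ x ∧ x ≤ u then mi i₀ x + D' x else 0
      rw [if_pos ⟨hx, hxu⟩]
      have h1 : -(mi i₀ x) ≤ D' x := hcore2 i₀ x hx hxu
      calc (0:R) = mi i₀ x + -(mi i₀ x) := by rw [add_neg_cancel]
        _ ≤ mi i₀ x + D' x := add_le_add le_rfl h1
    have hBadd : ∀ x y : G, 0 ≤ x → 0 ≤ y → x + y ≤ u → B (x+y) = B x + B y := by
      intro x y hx hy hxy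
      have hxu : x ≤ u := le_trans (le_add_of_nonneg_right hy) hxy
      have hyu : y ≤ u := le_trans (le_add_of_nonneg_left hx) hxy
      show (if 0 ≤ x + y ∧ x + y ≤ u then mi i₀ (x+y) + D' (x+y) else 0) =
        (if 0 ≤ x ∧ x ≤ u then mi i₀ x + D' x else 0) +
        (if 0 ≤ y ∧ y ≤ u then mi i₀ y + D' y else 0)
      rw [if_pos ⟨add_nonneg hx hy, hxy⟩, if_pos ⟨hx, hxu⟩, if_pos ⟨hy, hyu⟩,
        show D' (x+y) = D' x + D' y from hcore3 x y hx hy hxy,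
        jadd (mi i₀) (hJ i₀) x y hx hy hxy]
      abel
    have hqmeas : IsMeas (fun x => q₀ x + B x) := by
      rw [hIsMeas]
      obtain ⟨hq1, hq2⟩ := (hIsMeas q₀).mp hq₀
      exact ⟨fun x hx hxu => add_nonneg (hq1 x hx hxu) (hBpos x hx hxu),
        fun x y hx hy hxy => by
          rw [hq2 x y hx hy hxy, hBadd x y hx hy hxy]; abel⟩
    have hminfJ : IsJordan minf := by
      rw [hIsJordan]
      refine ⟨p₀, fun x => q₀ x + B x, hp₀, hqmeas, fun x => ?_⟩
      show mi i₀ x - B x = p₀ x - (q₀ x + B x)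
      rw [h₀ x]; abel
    have hgelow : ∀ i, le' minf (mi i) := by
      intro i
      rw [jle minf (mi i) hminfJ (hJ i)]
      intro x hx hxu
      rw [hminf_int x hx hxu]
      have h1 : -(mi i x) ≤ D' x := hcore2 i x hx hxu
      exact neg_le.mpr h1
    refine ⟨minf, hminfJ, hgelow, ?_, ?_⟩
    · intro h hhJ hlb
      rw [jle h minf hhJ hminfJ]
      intro x hx hxu
      rw [hminf_int x hx hxu]
      have h1 : D' x ≤ -(h x) := by
        refine hcore4 (fun z => -(h z)) ?_ ?_ x hx hxu
        · intro a b ha hb hab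
          show -(h (a + b)) = -(h a) + -(h b)
          rw [jadd h hhJ a b ha hb hab, neg_add]
        · intro i a ha hau
          show -(mi i a) ≤ -(h a)
          exact neg_le_neg_iff.mpr ((jle h (mi i) hhJ (hJ i)).mp (hlb i) a ha hau)
      exact le_neg.mpr h1
    · intro x hx hxu
      obtain ⟨hsne, hsbdd⟩ := hcore1 x hx hxu
      have hpt : ∀ a : G, 0 ≤ a → a ≤ u →
          sInf (Set.range (fun i => mi i a)) =
          -(sSup (Set.range (fun i => mi' i a))) := by
        intro a ha hau
        have hbdd' : BddAbove (Set.range (fun i => mi' i a)) :=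
          ⟨m₀' a, by rintro r ⟨i, rfl⟩; exact hb i a ha hau⟩
        have hseteq : {r : R | -r ∈ Set.range (fun i => mi' i a)} =
            Set.range (fun i => mi i a) := by
          ext r
          constructor
          · rintro ⟨i, hi⟩
            have hi' : -(mi i a) = -r := hi
            exact ⟨i, neg_injective hi'⟩
          · rintro ⟨i, rfl⟩
            exact ⟨i, rfl⟩
        rw [← hseteq]
        exact jsm_sInf_neg _ (Set.range_nonempty _) hbdd'
      have hset2 : {r : R | ∃ l : List G, l ≠ [] ∧ (∀ a ∈ l, 0 ≤ a) ∧
          l.sum = x ∧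
          (l.map (fun y => sInf (Set.range (fun i => mi i y)))).sum = r} =
          {r : R | -r ∈ jsmSet mi' x} := by
        ext r
        constructor
        · rintro ⟨l, hl1, hl2, hl3, hl4⟩
          have hmu : ∀ a ∈ l, 0 ≤ a ∧ a ≤ u := fun a hal => ⟨hl2 a hal,
            le_trans (jsm_mem_le_sum l hl2 a hal) (by rw [hl3]; exact hxu)⟩
          have heq : (l.map (fun y => sInf (Set.range (fun i => mi i y)))).sum
              = -((l.map (fun y => sSup (Set.range (fun i => mi' i y)))).sum) := by
            rw [← jsm_sum_map_neg]
            exact congrArg List.sum (List.map_congr_left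
              (fun a hal => hpt a (hmu a hal).1 (hmu a hal).2))
          refine ⟨l, hl1, hl2, hl3, ?_⟩
          rw [← hl4, heq, neg_neg]
        · rintro ⟨l, hl1, hl2, hl3, hl4⟩
          have hmu : ∀ a ∈ l, 0 ≤ a ∧ a ≤ u := fun a hal => ⟨hl2 a hal,
            le_trans (jsm_mem_le_sum l hl2 a hal) (by rw [hl3]; exact hxu)⟩
          have heq : (l.map (fun y => sInf (Set.range (fun i => mi i y)))).sum
              = -((l.map (fun y => sSup (Set.range (fun i => mi' i y)))).sum) := by
            rw [← jsm_sum_map_neg]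
            exact congrArg List.sum (List.map_congr_left
              (fun a hal => hpt a (hmu a hal).1 (hmu a hal).2))
          refine ⟨l, hl1, hl2, hl3, ?_⟩
          rw [heq, hl4, neg_neg]
      rw [hminf_int x hx hxu, hset2, jsm_sInf_neg _ hsne hsbdd]
  · -- SCALAR MULTIPLICATION PART
    intro c m hm
    obtain ⟨p, q, hp, hq, hpq⟩ := (hIsJordan m).mp hm
    have hc : c = max c 0 - max (-c) 0 := by
      rcases le_total c 0 with h | h
      · rw [max_eq_right h, max_eq_left (by linarith), zero_sub, neg_neg]
      · rw [max_eq_left h, max_eq_right (by linarith), sub_zero]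
    have smeas : ∀ (t : ℝ), 0 ≤ t → ∀ w : G → R, IsMeas w →
        IsMeas (fun x => t • w x) := by
      intro t ht w hw
      obtain ⟨hw1, hw2⟩ := (hIsMeas w).mp hw
      rw [hIsMeas]
      refine ⟨fun x hx hxu => ?_, fun x y hx hy hxy => by
        rw [hw2 x y hx hy hxy, smul_add]⟩
      have h1 := smul_le_smul_of_nonneg_left (hw1 x hx hxu) ht
      rwa [smul_zero] at h1
    have haddmeas : ∀ w₁ w₂ : G → R, IsMeas w₁ → IsMeas w₂ →
        IsMeas (fun x => w₁ x + w₂ x) := by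
      intro w₁ w₂ h1 h2
      obtain ⟨h11, h12⟩ := (hIsMeas w₁).mp h1
      obtain ⟨h21, h22⟩ := (hIsMeas w₂).mp h2
      rw [hIsMeas]
      exact ⟨fun x hx hxu => add_nonneg (h11 x hx hxu) (h21 x hx hxu),
        fun x y hx hy hxy => by
          rw [h12 x y hx hy hxy, h22 x y hx hy hxy]; abel⟩
    rw [hIsJordan]
    refine ⟨fun x => (max c 0) • p x + (max (-c) 0) • q x,
      fun x => (max c 0) • q x + (max (-c) 0) • p x,
      haddmeas _ _ (smeas _ (le_max_right c 0) p hp) (smeas _ (le_max_right (-c) 0) q hq),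
      haddmeas _ _ (smeas _ (le_max_right c 0) q hq) (smeas _ (le_max_right (-c) 0) p hp),
      fun x => ?_⟩
    rw [hpq x]
    nth_rewrite 1 [hc]
    rw [sub_smul, smul_sub, smul_sub]
    module
end
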